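/- Let (E,ℒ,𝒜) be a weakly left-resolving, normal labelled space. Then the topology on Γ whose basis is the collection of sets Z_{s,e:e₁,…,eₙ} coincides with the Renault–Deaconu topology on Γ, i.e., the topology whose basic open sets are the sets 𝒱(X,Y,m,n) = {(η, m−n, ξ) ∈ Γ : (η,ξ) ∈ X × Y and σ^m(η) = σ^n(ξ)}, where m,n ∈ ℕ and X ⊆ dom(σ^m), Y ⊆ dom(σ^n) are open sets on which σ^m and σ^n, respectively, are injective. -/

import Mathlib

open Classical

universe u v w

/-! ## Words over an alphabet -/

/-- Finite-or-infinite words over the alphabet `A`: `Sum.inl l` is the finite word `l`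
(with `[]` playing the role of the empty word `ω`), and `Sum.inr f` is the infinite word `f`. -/
abbrev Word (A : Type w) := List A ⊕ (ℕ → A)

/-- The length `|α| ∈ ℕ∞` of a word. -/
def wlength {A : Type w} : Word A → ℕ∞ :=
  Sum.elim (fun l => (l.length : ℕ∞)) fun _ => ⊤

/-- The finite prefix `α_{1,n}` of a word `α`. -/
def wprefix {A : Type w} : Word A → ℕ → List A :=
  Sum.elim (fun l n => l.take n) fun f n => List.ofFn fun i : Fin n => f i

/-- Concatenation `αβ` of a finite word `α` with a word `β`. -/
def wappend {A : Type w} (α : List A) : Word A → Word A :=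
  Sum.elim (fun l => Sum.inl (α ++ l)) fun f =>
    Sum.inr fun n => if h : n < α.length then α.get ⟨n, h⟩ else f (n - α.length)

/-- `β` is a beginning (finite prefix) of the word `α`. -/
def WPrefix {A : Type w} (β : List A) : Word A → Prop :=
  Sum.elim (fun l => β <+: l) fun f => β = List.ofFn fun i : Fin β.length => f i

/-! ## Triples -/

/-- Formal triples `(α, X, β)` together with a zero element; the inverse semigroup `S`
of a labelled space consists of such elements. -/
inductive Tr (V : Type u) (A : Type w) where
  | zero : Tr V A
  | mk : List A → Set V → List A → Tr V A

/-- The involution `(α,A,β)* = (β,A,α)` (fixing `0`). -/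
def Tr.tstar {V : Type u} {A : Type w} : Tr V A → Tr V A
  | .zero => .zero
  | .mk α X β => .mk β X α

/-! ## Labelled spaces -/

/-- The data of a labelled space `(E, ℒ, 𝒜)`: a directed graph on nonempty vertex/edge
sets, a surjective labelling map onto the alphabet `A`, and a family `𝒜` of subsets
of the vertex set. -/
structure LblSp (V : Type u) (E : Type v) (A : Type w) where
  src : E → V
  rng : E → V
  lab : E → A
  lab_surj : Function.Surjective lab
  nonempty_V : Nonempty V
  nonempty_E : Nonempty E
  𝒜 : Set (Set V)

namespace LblSp

variable {V : Type u} {Ed : Type v} {A : Type w} (Λ : LblSp V Ed A)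

/-- `α ≠ ω` is the label of some finite path of the graph. -/
def IsPathLabel (α : List A) : Prop :=
  ∃ l : List Ed, l ≠ [] ∧ List.Chain' (fun e f => Λ.rng e = Λ.src f) l ∧ l.map Λ.lab = α

/-- `ℒ^*`: the finite labelled paths, together with the empty word. -/
def LStar : Set (List A) := {α | α = [] ∨ Λ.IsPathLabel α}

/-- `ℒ^∞`: the infinite labelled paths. -/
def LInfty : Set (ℕ → A) :=
  {f | ∃ e : ℕ → Ed, (∀ n, Λ.rng (e n) = Λ.src (e (n + 1))) ∧ ∀ n, Λ.lab (e n) = f n}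

/-- `ℒ^{≤∞} = ℒ^* ∪ ℒ^∞`, as a predicate on `Word A`. -/
def IsWordW : Word A → Prop := Sum.elim (· ∈ Λ.LStar) (· ∈ Λ.LInfty)

/-- The relative range `r(X, α)` (with `r(X, ω) = X`). -/
noncomputable def relRange (X : Set V) (α : List A) : Set V :=
  if α = [] then X
  else {v | ∃ (l : List Ed) (h : l ≠ []), List.Chain' (fun e f => Λ.rng e = Λ.src f) l ∧
        l.map Λ.lab = α ∧ Λ.src (l.head h) ∈ X ∧ Λ.rng (l.getLast h) = v}

/-- The range `r(α) = r(E⁰, α)`. -/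
noncomputable def rangeL (α : List A) : Set V := Λ.relRange Set.univ α

/-- `𝒜^α = {X ∈ 𝒜 : X ⊆ r(α)}`. -/
noncomputable def Aset (α : List A) : Set (Set V) := {X | X ∈ Λ.𝒜 ∧ X ⊆ Λ.rangeL α}

/-- `(E, ℒ, 𝒜)` is a labelled space: `𝒜` is closed under finite intersections and
unions, contains all ranges `r(α)` for `α ∈ ℒ^{≥1}`, and is closed under relative ranges. -/
structure IsLS : Prop where
  inter_mem : ∀ X ∈ Λ.𝒜, ∀ Y ∈ Λ.𝒜, X ∩ Y ∈ Λ.𝒜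
  union_mem : ∀ X ∈ Λ.𝒜, ∀ Y ∈ Λ.𝒜, X ∪ Y ∈ Λ.𝒜
  range_mem : ∀ α ∈ Λ.LStar, α ≠ [] → Λ.rangeL α ∈ Λ.𝒜
  relRange_mem : ∀ X ∈ Λ.𝒜, ∀ α ∈ Λ.LStar, Λ.relRange X α ∈ Λ.𝒜

/-- A weakly left-resolving labelled space. -/
structure IsWLR : Prop where
  toIsLS : Λ.IsLS
  wlr : ∀ X ∈ Λ.𝒜, ∀ Y ∈ Λ.𝒜, ∀ α ∈ Λ.LStar, α ≠ [] →
    Λ.relRange (X ∩ Y) α = Λ.relRange X α ∩ Λ.relRange Y α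

/-- A weakly left-resolving normal labelled space. -/
structure IsNormal : Prop where
  toIsWLR : Λ.IsWLR
  sdiff_mem : ∀ X ∈ Λ.𝒜, ∀ Y ∈ Λ.𝒜, X \ Y ∈ Λ.𝒜

/-! ## The inverse semigroup `S` -/

/-- The underlying set of the inverse semigroup
`S = {(α,A,β) : α, β ∈ ℒ^*, A ∈ 𝒜^α ∩ 𝒜^β, A ≠ ∅} ∪ {0}`. -/
def SSet : Set (Tr V A) :=
  {t | t = Tr.zero ∨ ∃ α X β, t = Tr.mk α X β ∧ α ∈ Λ.LStar ∧ β ∈ Λ.LStar ∧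
    X ∈ Λ.Aset α ∧ X ∈ Λ.Aset β ∧ X.Nonempty}

/-- The semilattice of idempotents `E(S) = {(α,A,α)} ∪ {0}`. -/
def ESet : Set (Tr V A) :=
  {t | t = Tr.zero ∨ ∃ α X, t = Tr.mk α X α ∧ α ∈ Λ.LStar ∧ X ∈ Λ.Aset α ∧ X.Nonempty}

/-- The product of `S`. -/
noncomputable def tmul : Tr V A → Tr V A → Tr V A
  | Tr.zero, _ => Tr.zero
  | Tr.mk _ _ _, Tr.zero => Tr.zero
  | Tr.mk α X β, Tr.mk γ Y δ =>
    if β <+: γ ∧ (Λ.relRange X (γ.drop β.length) ∩ Y).Nonempty then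
      Tr.mk (α ++ γ.drop β.length) (Λ.relRange X (γ.drop β.length) ∩ Y) δ
    else if γ <+: β ∧ (X ∩ Λ.relRange Y (β.drop γ.length)).Nonempty then
      Tr.mk α (X ∩ Λ.relRange Y (β.drop γ.length)) (δ ++ β.drop γ.length)
    else Tr.zero

/-! ## Filters in `E(S)`, characters, and the tight spectrum -/

/-- A filter in `E(S)`: a nonempty subset of `E(S) ∖ {0}` closed under products and
upward closed in the natural order (`p ≤ q ↔ pq = p`). -/
def IsFilterES (ξ : Set (Tr V A)) : Prop :=
  ξ.Nonempty ∧ (∀ t ∈ ξ, t ∈ Λ.ESet ∧ t ≠ Tr.zero) ∧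
  (∀ p ∈ ξ, ∀ q ∈ ξ, Λ.tmul p q ∈ ξ) ∧
  (∀ p ∈ ξ, ∀ q ∈ Λ.ESet, Λ.tmul p q = p → q ∈ ξ)

/-- An ultrafilter in `E(S)`. -/
def IsUltraES (ξ : Set (Tr V A)) : Prop :=
  Λ.IsFilterES ξ ∧ ∀ ζ, Λ.IsFilterES ζ → ξ ⊆ ζ → ξ = ζ

/-- The character (indicator function) of a filter. -/
noncomputable def charOf (_Λ : LblSp V Ed A) (ξ : Set (Tr V A)) : Tr V A → Bool :=
  fun t => if t ∈ ξ then true else false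

/-- A character of `E(S)`: a nonzero, zero- and meet-preserving `{0,1}`-valued map on
`E(S)` (encoded as a map on triples vanishing outside `E(S)`). -/
def IsChar (φ : Tr V A → Bool) : Prop :=
  (∃ e, φ e = true) ∧ (∀ e, e ∉ Λ.ESet → φ e = false) ∧ φ Tr.zero = false ∧
  ∀ e ∈ Λ.ESet, ∀ f ∈ Λ.ESet, φ (Λ.tmul e f) = (φ e && φ f)

/-- The tight spectrum `Ê_tight`: the closure, within the space of characters with the
topology of pointwise convergence, of the set of characters of ultrafilters. -/
def tightSpectrum : Set (Tr V A → Bool) :=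
  {φ | Λ.IsChar φ} ∩ closure {φ | ∃ ξ, Λ.IsUltraES ξ ∧ φ = Λ.charOf ξ}

/-- A tight filter: a filter whose character lies in the tight spectrum. -/
def IsTightFilter (ξ : Set (Tr V A)) : Prop :=
  Λ.IsFilterES ξ ∧ Λ.charOf ξ ∈ Λ.tightSpectrum

/-- `ξ_{|β|} = {B : (β, B, β) ∈ ξ}`, the filter of `ξ` at level `β`. -/
def filterAt (_Λ : LblSp V Ed A) (ξ : Set (Tr V A)) (β : List A) : Set (Set V) :=
  {B | Tr.mk β B β ∈ ξ}

/-- `α` is the word associated with the filter `ξ` (i.e. `ξ = ξ^α`): the nonempty finite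
beginnings of `α` are exactly the words appearing in elements of `ξ`. -/
def HasWord (_Λ : LblSp V Ed A) (ξ : Set (Tr V A)) (α : Word A) : Prop :=
  ∀ β : List A, β ≠ [] → ((∃ B, Tr.mk β B β ∈ ξ) ↔ WPrefix β α)

/-! ## Filters and ultrafilters in `𝒜^β` -/

/-- A filter in the Boolean algebra `𝒜^β`. -/
def IsFilterAset (β : List A) (F : Set (Set V)) : Prop :=
  F.Nonempty ∧ F ⊆ Λ.Aset β ∧ (∀ X ∈ F, X.Nonempty) ∧
  (∀ X ∈ F, ∀ Y ∈ F, X ∩ Y ∈ F) ∧ (∀ X ∈ F, ∀ Y ∈ Λ.Aset β, X ⊆ Y → Y ∈ F)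

/-- An ultrafilter in `𝒜^β` (an element of `X_β`). -/
def IsUltraAset (β : List A) (F : Set (Set V)) : Prop :=
  Λ.IsFilterAset β F ∧ ∀ G, Λ.IsFilterAset β G → F ⊆ G → F = G

/-- The gluing map `g_{(α)β}(F) = {C ∩ r(αβ) : C ∈ F}` on ultrafilters. -/
noncomputable def gmap (α β : List A) (F : Set (Set V)) : Set (Set V) :=
  {X | ∃ C ∈ F, X = C ∩ Λ.rangeL (α ++ β)}

/-- The cutting map `h_{[α]β}(F) = {C ∈ 𝒜^β : D ⊆ C for some D ∈ F}` on ultrafilters. -/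
noncomputable def hmap (α β : List A) (F : Set (Set V)) : Set (Set V) :=
  {C | C ∈ Λ.Aset β ∧ ∃ D ∈ F, D ⊆ C}

/-! ## Cutting and gluing of (tight) filters in `E(S)` -/

/-- The cutting map `H_{[α]β} : T^{αβ} → T^{(α)β}` (word-free formulation): the filter
whose family is `η_n = h_{[α]β_{1,n}}(ξ_{n+|α|})`; `H_{[ω]β}` is the identity. -/
noncomputable def Hcut (α : List A) (ξ : Set (Tr V A)) : Set (Tr V A) :=
  if α = [] then ξ
  else {t | ∃ δ B, t = Tr.mk δ B δ ∧ B ∈ Λ.Aset δ ∧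
        ∃ D, Tr.mk (α ++ δ) D (α ++ δ) ∈ ξ ∧ D ⊆ B}

/-- The gluing map `G_{(α)β} : T^{(α)β} → T^{αβ}` (word-free formulation): the filter with
family `η_{|α|+n} = g_{(α)β_{1,n}}(ξ_n)` for `n ≥ 1` and `η_i = f_{α_{1,i}[…]}(…)` for
`i ≤ |α|`, with the two cases according to whether the word of `ξ` is empty (`β = ω`)
or not; `G_{(ω)β}` is the identity. -/
noncomputable def Gglue (α : List A) (ξ : Set (Tr V A)) : Set (Tr V A) :=
  if α = [] then ξ
  else if ∃ (δ : List A) (B : Set V), δ ≠ [] ∧ Tr.mk δ B δ ∈ ξ then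
    {t | ∃ δ B, t = Tr.mk δ B δ ∧
      ((α <+: δ ∧ α ≠ δ ∧ ∃ C, Tr.mk (δ.drop α.length) C (δ.drop α.length) ∈ ξ ∧
          B = C ∩ Λ.rangeL δ) ∨
       (δ <+: α ∧ B ∈ Λ.Aset δ ∧ ∃ (b : A) (C : Set V), Tr.mk [b] C [b] ∈ ξ ∧
          Λ.relRange B (α.drop δ.length ++ [b]) = C ∩ Λ.rangeL (α ++ [b])))}
  else
    {t | ∃ δ B, t = Tr.mk δ B δ ∧ δ <+: α ∧ B ∈ Λ.Aset δ ∧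
      ∃ C, Tr.mk [] C [] ∈ ξ ∧ Λ.relRange B (α.drop δ.length) = C ∩ Λ.rangeL α}

/-- `T^β`: the set of tight filters with associated word `β`. -/
def TWord (β : Word A) : Set (Set (Tr V A)) :=
  {ξ | Λ.IsTightFilter ξ ∧ Λ.HasWord ξ β}

/-- `T^{(α)β} = {ξ ∈ T^β : r(α) ∈ ξ_0}` (equal to `T^β` when `α = ω`), the domain of the
gluing map `G_{(α)β}`. -/
def TGlueDom (α : List A) (β : Word A) : Set (Set (Tr V A)) :=
  {ξ | Λ.IsTightFilter ξ ∧ Λ.HasWord ξ β ∧ (α ≠ [] → Tr.mk [] (Λ.rangeL α) [] ∈ ξ)}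

/-! ## The groupoid `Γ` -/

/-- The defining relation of
`Γ = {(ξ^{aγ}, |a|-|b|, η^{bγ}) ∈ T × ℤ × T : H_{[a]γ}(ξ^{aγ}) = H_{[b]γ}(η^{bγ})}`. -/
def InGamma (η : Set (Tr V A)) (m : ℤ) (ξ : Set (Tr V A)) : Prop :=
  ∃ (a b : List A) (γ : Word A), a ∈ Λ.LStar ∧ b ∈ Λ.LStar ∧ Λ.IsWordW γ ∧
    η ∈ Λ.TWord (wappend a γ) ∧ ξ ∈ Λ.TWord (wappend b γ) ∧
    m = (a.length : ℤ) - (b.length : ℤ) ∧ Λ.Hcut a η = Λ.Hcut b ξ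

/-- `Γ` as a set of raw triples. -/
def GammaRaw : Set (Set (Tr V A) × ℤ × Set (Tr V A)) :=
  {p | Λ.InGamma p.1 p.2.1 p.2.2}

/-- The basic set `Z_{s,e:e₁,…,eₙ}` of `Γ` (raw version), for `s = (μ, X, ν)`:
triples `(η^{μγ}, |μ|-|ν|, ξ^{νγ}) ∈ Γ` with `e ∈ ξ`, `eᵢ ∉ ξ` and
`H_{[μ]γ}(η) = H_{[ν]γ}(ξ)`. -/
noncomputable def ZrawGen (μ ν : List A) (e : Tr V A) (es : List (Tr V A)) :
    Set (Set (Tr V A) × ℤ × Set (Tr V A)) :=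
  {p | Λ.InGamma p.1 p.2.1 p.2.2 ∧ p.2.1 = (μ.length : ℤ) - (ν.length : ℤ) ∧
       e ∈ p.2.2 ∧ (∀ f ∈ es, f ∉ p.2.2) ∧
       ∃ γ : Word A, Λ.HasWord p.1 (wappend μ γ) ∧ Λ.HasWord p.2.2 (wappend ν γ) ∧
         Λ.Hcut μ p.1 = Λ.Hcut ν p.2.2}

/-- `Z_s = Z_{s, s*s}` for `s = (μ, X, ν)` (raw version). -/
noncomputable def Zraw (μ : List A) (X : Set V) (ν : List A) :
    Set (Set (Tr V A) × ℤ × Set (Tr V A)) :=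
  Λ.ZrawGen μ ν (Tr.mk ν X ν) []

/-- The basic set `V_{e:e₁,…,eₙ} = U_{e:e₁,…,eₙ} ∩ T` of the tight filter space
(raw version). -/
def VrawGen (e : Tr V A) (es : List (Tr V A)) : Set (Set (Tr V A)) :=
  {ξ | Λ.IsTightFilter ξ ∧ e ∈ ξ ∧ ∀ f ∈ es, f ∉ ξ}

/-- The shift map `σ : T^{(1)} → T`, `σ(ξ^{aγ}) = H_{[a]γ}(ξ^{aγ})` (extended by the
identity off its domain). -/
noncomputable def sigmaMap (ξ : Set (Tr V A)) : Set (Tr V A) :=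
  if h : ∃ a : A, ∃ B : Set V, Tr.mk [a] B [a] ∈ ξ then Λ.Hcut [h.choose] ξ else ξ

/-- The Renault–Deaconu basic set
`𝒱(X, Y, m, n) = {(η, m-n, ξ) ∈ Γ : (η, ξ) ∈ X × Y, σ^m(η) = σ^n(ξ)}` (raw version). -/
noncomputable def VrdRaw (Xs Ys : Set (Set (Tr V A))) (m n : ℕ) :
    Set (Set (Tr V A) × ℤ × Set (Tr V A)) :=
  {p | Λ.InGamma p.1 p.2.1 p.2.2 ∧ p.2.1 = (m : ℤ) - (n : ℤ) ∧
       p.1 ∈ Xs ∧ p.2.2 ∈ Ys ∧ (Λ.sigmaMap)^[m] p.1 = (Λ.sigmaMap)^[n] p.2.2}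

/-! ## The groupoid of germs `𝒢_tight` -/

/-- The action `θ_s(φ)(e) = φ(s* e s)` of `S` on characters. -/
noncomputable def theta (s : Tr V A) (φ : Tr V A → Bool) : Tr V A → Bool :=
  fun e => if e ∈ Λ.ESet then φ (Λ.tmul (Λ.tmul (Tr.tstar s) e) s) else false

/-- `Ω = {(s, φ) ∈ S × Ê_tight : φ ∈ D_{s*s}}`. -/
noncomputable def Omega : Set (Tr V A × (Tr V A → Bool)) :=
  {p | p.1 ∈ Λ.SSet ∧ p.2 ∈ Λ.tightSpectrum ∧ p.2 (Λ.tmul (Tr.tstar p.1) p.1) = true}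

/-- The germ equivalence relation on `Ω`: `(s,φ) ∼ (t,ψ)` iff `φ = ψ` and there is
`e ∈ E(S)` with `φ(e) = 1` and `se = te`. -/
noncomputable def germEquiv (p q : Tr V A × (Tr V A → Bool)) : Prop :=
  p.2 = q.2 ∧ ∃ e ∈ Λ.ESet, p.2 e = true ∧ Λ.tmul p.1 e = Λ.tmul q.1 e

/-- The map `Φ` at the level of `Ω`: for `t = (β, X, γ)` and `φ` with filter `ξ^α`
(where `α = γα'`), `Φ[t,φ] = ((G_{(β)α'} ∘ H_{[γ]α'})(ξ^α), |β|-|γ|, ξ^α)`. -/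
noncomputable def PhiRaw : Tr V A → (Tr V A → Bool) → Set (Tr V A) × ℤ × Set (Tr V A)
  | Tr.zero, _ => (∅, 0, ∅)
  | Tr.mk β _ γ, φ =>
      (Λ.Gglue β (Λ.Hcut γ {e | φ e = true}), (β.length : ℤ) - (γ.length : ℤ),
        {e | φ e = true})

/-! ## Miscellaneous notions -/

/-- `ℒ(XE¹) = {ℒ(e) : e ∈ E¹, s(e) ∈ X}`. -/
def labE (X : Set V) : Set A := {a | ∃ e, Λ.lab e = a ∧ Λ.src e ∈ X}

/-- The set `E⁰_sink` of sinks. -/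
def sinks : Set V := {v | ∀ e, Λ.src e ≠ v}

/-- The filter in `E(S)` associated with a pair (word, complete family). -/
def pairFilter (_Λ : LblSp V Ed A) (α : Word A) (F : ℕ → Set (Set V)) : Set (Tr V A) :=
  {t | ∃ (n : ℕ) (B : Set V), (n : ℕ∞) ≤ wlength α ∧ B ∈ F n ∧
    t = Tr.mk (wprefix α n) B (wprefix α n)}

/-- A complete family for the word `α`: `F n` is a filter in `𝒜^{α_{1,n}}` for
`1 ≤ n ≤ |α|` (`F 0` is a filter in `𝒜` or empty, and a filter if `α = ω`), and
`F n = {X ∈ 𝒜^{α_{1,n}} : r(X, α_{n+1}) ∈ F (n+1)}` for all `n < |α|`. -/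
noncomputable def IsCompleteFamily (α : Word A) (F : ℕ → Set (Set V)) : Prop :=
  Λ.IsWordW α ∧
  (∀ n : ℕ, 1 ≤ n → (n : ℕ∞) ≤ wlength α → Λ.IsFilterAset (wprefix α n) (F n)) ∧
  (F 0 = ∅ ∨ Λ.IsFilterAset [] (F 0)) ∧
  (wlength α = 0 → Λ.IsFilterAset [] (F 0)) ∧
  (∀ n : ℕ, ((n + 1 : ℕ) : ℕ∞) ≤ wlength α →
    F n = {X | X ∈ Λ.Aset (wprefix α n) ∧
      Λ.relRange X ((wprefix α (n + 1)).drop n) ∈ F (n + 1)})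

/-! ## The tight filter space `T` and the groupoid `Γ` as types -/

/-- The space `T` of tight filters. -/
structure TightT where
  carrier : Set (Tr V A)
  tight : Λ.IsTightFilter carrier

/-- The topology of `T`, induced from pointwise convergence of characters. -/
noncomputable instance : TopologicalSpace Λ.TightT :=
  TopologicalSpace.induced (fun ξ => Λ.charOf ξ.carrier) inferInstance

/-- The groupoid `Γ ⊆ T × ℤ × T` as a type. -/
structure GammaT where
  fst : Λ.TightT
  mid : ℤ
  lst : Λ.TightT
  mem : Λ.InGamma fst.carrier mid lst.carrier

/-- The raw triple underlying an element of `Γ`. -/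
def rawOf (p : Λ.GammaT) : Set (Tr V A) × ℤ × Set (Tr V A) :=
  (p.fst.carrier, p.mid, p.lst.carrier)

/-- The collection of all sets `Z_{s,e:e₁,…,eₙ}` (for `s ∈ S`, `e, eᵢ ∈ E(S)`),
as subsets of `Γ`. -/
noncomputable def ZBasisT : Set (Set Λ.GammaT) :=
  {Z | ∃ (μ : List A) (X : Set V) (ν : List A) (e : Tr V A) (es : List (Tr V A)),
    Tr.mk μ X ν ∈ Λ.SSet ∧ e ∈ Λ.ESet ∧ (∀ f ∈ es, f ∈ Λ.ESet) ∧
    Z = {p : Λ.GammaT | Λ.rawOf p ∈ Λ.ZrawGen μ ν e es}}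

/-- The topology on `Γ` induced by the isomorphism `Φ` from the germ topology of
`𝒢_tight`, generated by the images of the basic sets `Θ(s, 𝒰)` with `𝒰 ⊆ D_{s*s}`
open in the tight spectrum. -/
noncomputable def PhiTopology : TopologicalSpace Λ.GammaT :=
  TopologicalSpace.generateFrom
    {Z | ∃ (s : Tr V A) (U : Set (Tr V A → Bool)), s ∈ Λ.SSet ∧
      (∃ W, IsOpen W ∧ U = W ∩ Λ.tightSpectrum) ∧
      (∀ φ ∈ U, φ (Λ.tmul (Tr.tstar s) s) = true) ∧
      Z = {p : Λ.GammaT | ∃ φ ∈ U, (s, φ) ∈ Λ.Omega ∧ Λ.PhiRaw s φ = Λ.rawOf p}}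

end LblSp

/-! ### Auxiliary word lemmas -/

namespace LblSp

section AuxWords

variable {A : Type w}

theorem aux_wappend_nil (γ : Word A) : wappend ([] : List A) γ = γ := by
  cases γ with
  | inl l => simp [wappend]
  | inr f =>
    simp [wappend]

theorem aux_wappend_assoc (a b : List A) (γ : Word A) :
    wappend (a ++ b) γ = wappend a (wappend b γ) := by
  cases γ with
  | inl l => simp [wappend]
  | inr f =>
    simp only [wappend, Sum.elim_inr]
    congr 1
    funext n
    by_cases h1 : n < a.length
    · rw [dif_pos (by simp only [List.length_append]; omega), dif_pos h1]
      simp only [List.get_eq_getElem]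
      exact List.getElem_append_left h1
    · rw [dif_neg h1]
      by_cases h2 : n < a.length + b.length
      · rw [dif_pos (by simp only [List.length_append]; omega), dif_pos (by omega)]
        simp only [List.get_eq_getElem]
        exact List.getElem_append_right (by omega)
      · rw [dif_neg (by simp only [List.length_append]; omega), dif_neg (by omega)]
        congr 1
        simp only [List.length_append]
        omega

theorem aux_WPrefix_inr_iff {β : List A} {f : ℕ → A} :
    WPrefix β (Sum.inr f) ↔ ∀ i (h : i < β.length), β[i] = f i := by
  show β = List.ofFn _ ↔ _
  constructor
  · intro h i hi
    rw [List.getElem_of_eq h hi]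
    simp
  · intro h
    apply List.ext_getElem (by simp)
    intro i h1 h2
    simp [h i h1]

theorem aux_WPrefix_nil (α : Word A) : WPrefix [] α := by
  cases α with
  | inl l => exact List.nil_prefix
  | inr f => rw [aux_WPrefix_inr_iff]; intro i h; simp at h

theorem aux_wappend_inr_lt {μ : List A} {f : ℕ → A} {n : ℕ} (h : n < μ.length) :
    ∃ g : ℕ → A, wappend μ (Sum.inr f) = Sum.inr g ∧ g n = μ[n]
      ∧ (∀ k (hk : k < μ.length), g k = μ[k]) ∧ ∀ k, μ.length ≤ k → g k = f (k - μ.length) := by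
  refine ⟨_, rfl, ?_, ?_, ?_⟩
  · simp [h]
  · intro k hk; simp [hk]
  · intro k hk; simp [Nat.not_lt.mpr hk]

theorem aux_WPrefix_wappend_iff {μ δ : List A} {γ : Word A} :
    WPrefix (μ ++ δ) (wappend μ γ) ↔ WPrefix δ γ := by
  cases γ with
  | inl l =>
    show μ ++ δ <+: μ ++ l ↔ δ <+: l
    exact List.prefix_append_right_inj μ
  | inr f =>
    show WPrefix (μ ++ δ) (Sum.inr _) ↔ WPrefix δ (Sum.inr f)
    rw [aux_WPrefix_inr_iff, aux_WPrefix_inr_iff]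
    constructor
    · intro h i hi
      have h2 := h (μ.length + i) (by simp only [List.length_append]; omega)
      rw [List.getElem_append_right (by omega), dif_neg (by omega)] at h2
      simpa using h2
    · intro h i hi
      rcases lt_or_ge i μ.length with h2 | h2
      · rw [List.getElem_append_left h2, dif_pos h2]
        simp
      · rw [List.getElem_append_right (by omega), dif_neg (by omega)]
        exact h (i - μ.length) (by simp only [List.length_append] at hi; omega)

theorem aux_WPrefix_wappend_self (μ : List A) (γ : Word A) :
    WPrefix μ (wappend μ γ) := by
  have := aux_WPrefix_wappend_iff (μ := μ) (δ := []) (γ := γ)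
  simpa using this.mpr (aux_WPrefix_nil γ)

theorem aux_WPrefix_take {β : List A} {μ : List A} {γ : Word A}
    (h : WPrefix β (wappend μ γ)) (hle : β.length ≤ μ.length) :
    β = μ.take β.length := by
  cases γ with
  | inl l =>
    have h' : β <+: μ ++ l := h
    rw [List.prefix_iff_eq_take] at h'
    conv_lhs => rw [h']
    rw [List.take_append_of_le_length hle]
  | inr f =>
    simp only [wappend, Sum.elim_inr] at h
    rw [aux_WPrefix_inr_iff] at h
    apply List.ext_getElem (by simp; omega)
    intro i h1 h2
    rw [h i h1, dif_pos (by omega)]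
    simp [List.getElem_take]

theorem aux_WPrefix_drop {β : List A} {μ : List A} {γ : Word A}
    (h : WPrefix β (wappend μ γ)) (hle : μ.length ≤ β.length) :
    β = μ ++ β.drop μ.length ∧ WPrefix (β.drop μ.length) γ := by
  have htake : β.take μ.length = μ := by
    cases γ with
    | inl l =>
      have h' : β <+: μ ++ l := h
      rw [List.prefix_iff_eq_take] at h'
      rw [h', List.take_take, min_eq_left hle, List.take_append_of_le_length le_rfl,
        List.take_of_length_le le_rfl]
    | inr f =>
      simp only [wappend, Sum.elim_inr] at h
      rw [aux_WPrefix_inr_iff] at h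
      apply List.ext_getElem (by simp [hle])
      intro i h1 h2
      simp only [List.length_take] at h1
      rw [List.getElem_take, h i (by omega), dif_pos h2]
      simp
  have hβ : β = μ ++ β.drop μ.length := by
    conv_lhs => rw [← List.take_append_drop μ.length β, htake]
  refine ⟨hβ, ?_⟩
  rw [← aux_WPrefix_wappend_iff (μ := μ)]
  rw [← hβ]; exact h

theorem aux_WPrefix_split {μ : List A} {α : Word A} (h : WPrefix μ α) :
    ∃ γ, α = wappend μ γ := by
  cases α with
  | inl l =>
    obtain ⟨t, ht⟩ : μ <+: l := h
    exact ⟨Sum.inl t, by simp [wappend, ht]⟩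
  | inr f =>
    rw [aux_WPrefix_inr_iff] at h
    refine ⟨Sum.inr fun n => f (n + μ.length), ?_⟩
    simp only [wappend, Sum.elim_inr]
    congr 1
    funext n
    rcases lt_or_ge n μ.length with h2 | h2
    · rw [dif_pos h2]; exact (h n h2).symm
    · rw [dif_neg (by omega)]; congr 1; omega

theorem aux_wprefix_length {α : Word A} {m : ℕ} (h : (m : ℕ∞) ≤ wlength α) :
    (wprefix α m).length = m := by
  cases α with
  | inl l =>
    simp only [wlength, Sum.elim_inl, Nat.cast_le] at h
    simp [wprefix, h]
  | inr f => simp [wprefix]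

theorem aux_wprefix_split {α : Word A} {m : ℕ} (h : (m : ℕ∞) ≤ wlength α) :
    ∃ γ, α = wappend (wprefix α m) γ := by
  cases α with
  | inl l =>
    simp only [wlength, Sum.elim_inl, Nat.cast_le] at h
    exact ⟨Sum.inl (l.drop m), by simp [wappend, wprefix]⟩
  | inr f =>
    refine ⟨Sum.inr fun n => f (n + m), ?_⟩
    simp only [wappend, wprefix, Sum.elim_inr]
    congr 1
    funext n
    rcases lt_or_ge n m with h2 | h2
    · simp only [List.length_ofFn]; rw [dif_pos h2]
      simp [h2]
    · simp only [List.length_ofFn]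
      rw [dif_neg (by omega)]
      congr 1
      omega

theorem aux_length_le_wlength_wappend (μ : List A) (γ : Word A) :
    (μ.length : ℕ∞) ≤ wlength (wappend μ γ) := by
  cases γ with
  | inl l => simp [wappend, wlength]
  | inr f => simp [wappend, wlength]

theorem aux_WPrefix_of_prefix {β' β : List A} {α : Word A} (h : β' <+: β)
    (h2 : WPrefix β α) : WPrefix β' α := by
  cases α with
  | inl l => exact h.trans h2
  | inr f =>
    rw [aux_WPrefix_inr_iff] at h2 ⊢
    intro i hi
    rw [h.getElem hi]
    exact h2 i (hi.trans_le h.length_le)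

theorem aux_word_unique {α α' : Word A}
    (h : ∀ β : List A, β ≠ [] → (WPrefix β α ↔ WPrefix β α')) : α = α' := by
  have key : ∀ (f : ℕ → A) (l : List A), (∀ β : List A, β ≠ [] →
      (WPrefix β (Sum.inr f) ↔ WPrefix β (Sum.inl l))) → False := by
    intro f l hfl
    have h1 : WPrefix (List.ofFn fun i : Fin (l.length + 1) => f i) (Sum.inr f) := by
      rw [aux_WPrefix_inr_iff]; intro i hi; simp only [List.length_ofFn] at hi
      rw [List.getElem_ofFn]
    have h2 := (hfl _ (by simp)).mp h1
    have : (List.ofFn fun i : Fin (l.length + 1) => f i) <+: l := h2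
    have := this.length_le
    simp at this
  cases α with
  | inl l =>
    cases α' with
    | inl l' =>
      rcases eq_or_ne l [] with rfl | hl
      · rcases eq_or_ne l' [] with rfl | hl'
        · rfl
        · have := (h l' hl').mpr (List.prefix_refl (l := l'))
          have : l' <+: [] := this
          simp [List.prefix_nil] at this
          exact absurd this hl'
      · have h1 := (h l hl).mp (List.prefix_refl (l := l))
        have h1 : l <+: l' := h1
        rcases eq_or_ne l' [] with rfl | hl'
        · simp [List.prefix_nil] at h1; exact absurd h1 hl
        · have h2 := (h l' hl').mpr (List.prefix_refl (l := l'))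
          have h2 : l' <+: l := h2
          exact congrArg Sum.inl (h1.eq_of_length_le h2.length_le)
    | inr f => exact absurd (fun β hβ => (h β hβ).symm) (by intro hh; exact key f l hh)
  | inr f =>
    cases α' with
    | inl l' => exact absurd (fun β hβ => h β hβ) (by intro hh; exact key f l' hh)
    | inr f' =>
      congr 1
      funext n
      have h1 : WPrefix (List.ofFn fun i : Fin (n + 1) => f i) (Sum.inr f) := by
        rw [aux_WPrefix_inr_iff]; intro i hi; simp only [List.length_ofFn] at hi
        rw [List.getElem_ofFn]
      have h2 := (h _ (by simp)).mp h1
      rw [aux_WPrefix_inr_iff] at h2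
      have := h2 n (by simp)
      rw [List.getElem_ofFn] at this
      exact this

theorem aux_WPrefix_singleton {c a : A} {μ' : List A} {γ : Word A}
    (h : WPrefix [c] (wappend (a :: μ') γ)) : c = a := by
  have := aux_WPrefix_take h (by simp)
  simpa using this

theorem aux_wprefix_WPrefix {α : Word A} {m : ℕ} (h : (m : ℕ∞) ≤ wlength α) :
    WPrefix (wprefix α m) α := by
  obtain ⟨γ, hγ⟩ := aux_wprefix_split h
  conv_rhs => rw [hγ]
  exact aux_WPrefix_wappend_self _ _

end AuxWords

end LblSp

/-! ### Auxiliary graph lemmas -/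

namespace LblSp

section AuxGraph

variable {V : Type u} {Ed : Type v} {A : Type w} (Λ : LblSp V Ed A)

theorem aux_relRange_nil (X : Set V) : Λ.relRange X [] = X := if_pos rfl

theorem aux_rangeL_nil : Λ.rangeL [] = Set.univ := aux_relRange_nil Λ Set.univ

theorem aux_relRange_mono {X Y : Set V} (h : X ⊆ Y) (α : List A) :
    Λ.relRange X α ⊆ Λ.relRange Y α := by
  rcases eq_or_ne α [] with rfl | hα
  · rw [aux_relRange_nil, aux_relRange_nil]; exact h
  · rw [relRange, if_neg hα, relRange, if_neg hα]
    rintro v ⟨l, hl, hch, hmap, hsrc, hlast⟩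
    exact ⟨l, hl, hch, hmap, h hsrc, hlast⟩

theorem aux_relRange_empty (α : List A) : Λ.relRange ∅ α = ∅ := by
  rcases eq_or_ne α [] with rfl | hα
  · exact aux_relRange_nil Λ ∅
  · rw [relRange, if_neg hα]
    ext v
    simp only [Set.mem_setOf_eq, Set.mem_empty_iff_false, iff_false]
    rintro ⟨l, hl, hch, hmap, hsrc, hlast⟩
    exact hsrc

theorem aux_relRange_comp (X : Set V) (α β : List A) :
    Λ.relRange X (α ++ β) = Λ.relRange (Λ.relRange X α) β := by
  rcases eq_or_ne α [] with rfl | hα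
  · simp [aux_relRange_nil]
  rcases eq_or_ne β [] with rfl | hβ
  · simp [aux_relRange_nil]
  have hαβ : α ++ β ≠ [] := by simp [hα]
  rw [relRange, if_neg hαβ]
  conv_rhs => rw [relRange, if_neg hβ]
  ext v
  constructor
  · rintro ⟨l, hl, hch, hmap, hsrc, hlast⟩
    have hlen : l.length = α.length + β.length := by
      have := congrArg List.length hmap; simpa using this
    have hl₁len : (l.take α.length).length = α.length := by simp [hlen]
    have hl₂len : (l.drop α.length).length = β.length := by simp [hlen]
    have hl₁ne : l.take α.length ≠ [] := by
      intro hh; rw [hh] at hl₁len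
      exact hα (List.length_eq_zero_iff.mp hl₁len.symm)
    have hl₂ne : l.drop α.length ≠ [] := by
      intro hh; rw [hh] at hl₂len
      exact hβ (List.length_eq_zero_iff.mp hl₂len.symm)
    have hdec : l = l.take α.length ++ l.drop α.length := (List.take_append_drop _ _).symm
    have hch' := hch
    rw [hdec] at hch'
    obtain ⟨hc1, hc2, hlink⟩ := List.isChain_append.mp hch'
    have hlink' : Λ.rng ((l.take α.length).getLast hl₁ne) = Λ.src ((l.drop α.length).head hl₂ne) :=
      hlink _ (by rw [List.getLast?_eq_getLast hl₁ne]; rfl) _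
        (by rw [List.head?_eq_head hl₂ne]; rfl)
    have hmap1 : (l.take α.length).map Λ.lab = α := by
      rw [List.map_take, hmap, List.take_append_of_le_length le_rfl, List.take_of_length_le le_rfl]
    have hmap2 : (l.drop α.length).map Λ.lab = β := by
      rw [List.map_drop, hmap, List.drop_left]
    have hhead : l.head hl = (l.take α.length).head hl₁ne := by
      have h1 : l.head? = ((l.take α.length) ++ (l.drop α.length)).head? := by rw [← hdec]
      rw [List.head?_append_of_ne_nil _ hl₁ne, List.head?_eq_head hl,
        List.head?_eq_head hl₁ne] at h1
      exact Option.some.inj h1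
    have hlast' : l.getLast hl = (l.drop α.length).getLast hl₂ne := by
      have h1 : l.getLast? = ((l.take α.length) ++ (l.drop α.length)).getLast? := by rw [← hdec]
      rw [List.getLast?_append_of_ne_nil _ hl₂ne, List.getLast?_eq_getLast hl,
        List.getLast?_eq_getLast hl₂ne] at h1
      exact Option.some.inj h1
    refine ⟨l.drop α.length, hl₂ne, hc2, hmap2, ?_, ?_⟩
    · rw [← hlink']
      rw [relRange, if_neg hα]
      exact ⟨l.take α.length, hl₁ne, hc1, hmap1, by rwa [← hhead], rfl⟩
    · rw [← hlast']; exact hlast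
  · rintro ⟨l₂, hl₂, hch2, hmap2, hsrc2, hlast2⟩
    rw [relRange, if_neg hα] at hsrc2
    obtain ⟨l₁, hl₁, hch1, hmap1, hsrc1, hlast1⟩ := hsrc2
    have hne : l₁ ++ l₂ ≠ [] := by simp [hl₁]
    refine ⟨l₁ ++ l₂, hne, ?_, by rw [List.map_append, hmap1, hmap2], ?_, ?_⟩
    · refine List.isChain_append.mpr ?_
      refine ⟨hch1, hch2, ?_⟩
      intro x hx y hy
      rw [List.getLast?_eq_getLast hl₁] at hx
      rw [List.head?_eq_head hl₂] at hy
      obtain rfl := Option.some.inj hx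
      obtain rfl := Option.some.inj hy
      exact hlast1
    · have hh : (l₁ ++ l₂).head hne = l₁.head hl₁ := by
        have h1 := List.head?_append_of_ne_nil l₁ (l₂ := l₂) hl₁
        rw [List.head?_eq_head hne, List.head?_eq_head hl₁] at h1
        exact Option.some.inj h1
      rw [hh]; exact hsrc1
    · have hh : (l₁ ++ l₂).getLast hne = l₂.getLast hl₂ := by
        have h1 := List.getLast?_append_of_ne_nil l₁ hl₂
        rw [List.getLast?_eq_getLast hne, List.getLast?_eq_getLast hl₂] at h1
        exact Option.some.inj h1
      rw [hh]; exact hlast2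
theorem aux_rangeL_append (w u : List A) :
    Λ.rangeL (w ++ u) = Λ.relRange (Λ.rangeL w) u :=
  aux_relRange_comp Λ Set.univ w u

theorem aux_relRange_subset_rangeL {X : Set V} {w : List A} (h : X ⊆ Λ.rangeL w)
    (u : List A) : Λ.relRange X u ⊆ Λ.rangeL (w ++ u) := by
  rw [aux_rangeL_append]
  exact aux_relRange_mono Λ h u

theorem aux_rangeL_append_subset (w u : List A) : Λ.rangeL (w ++ u) ⊆ Λ.rangeL u := by
  rw [aux_rangeL_append]
  exact aux_relRange_mono Λ (Set.subset_univ _) u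

theorem aux_relRange_subset_rangeL' {X : Set V} (u : List A) :
    Λ.relRange X u ⊆ Λ.rangeL u :=
  aux_relRange_mono Λ (Set.subset_univ _) u

theorem aux_relRange_nonempty {X : Set V} {u : List A}
    (h : (Λ.relRange X u).Nonempty) : X.Nonempty := by
  by_contra hh
  rw [Set.not_nonempty_iff_eq_empty] at hh
  rw [hh, aux_relRange_empty] at h
  exact Set.not_nonempty_empty h

theorem aux_nil_LStar : ([] : List A) ∈ Λ.LStar := Or.inl rfl

theorem aux_IsPathLabel_append_left {w u : List A} (h : Λ.IsPathLabel (w ++ u))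
    (hw : w ≠ []) : Λ.IsPathLabel w := by
  obtain ⟨l, hl, hch, hmap⟩ := h
  have hlen : l.length = w.length + u.length := by
    have := congrArg List.length hmap; simpa using this
  refine ⟨l.take w.length, ?_, hch.take _, ?_⟩
  · intro hh
    have := congrArg List.length hh
    simp [hlen] at this
    exact hw this
  · rw [List.map_take, hmap, List.take_append_of_le_length le_rfl,
      List.take_of_length_le le_rfl]

theorem aux_IsPathLabel_append_right {w u : List A} (h : Λ.IsPathLabel (w ++ u))
    (hu : u ≠ []) : Λ.IsPathLabel u := by
  obtain ⟨l, hl, hch, hmap⟩ := h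
  have hlen : l.length = w.length + u.length := by
    have := congrArg List.length hmap; simpa using this
  refine ⟨l.drop w.length, ?_, hch.drop _, ?_⟩
  · intro hh
    have := congrArg List.length hh
    simp [hlen] at this
    exact hu this
  · rw [List.map_drop, hmap, List.drop_left]

theorem aux_LStar_append_left {w u : List A} (h : w ++ u ∈ Λ.LStar) : w ∈ Λ.LStar := by
  rcases eq_or_ne w [] with rfl | hw
  · exact aux_nil_LStar Λ
  rcases h with h | h
  · simp at h; exact absurd h.1 hw
  · rcases eq_or_ne u [] with rfl | hu
    · rw [List.append_nil] at h; exact Or.inr h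
    · exact Or.inr (aux_IsPathLabel_append_left Λ h hw)

theorem aux_LStar_append_right {w u : List A} (h : w ++ u ∈ Λ.LStar) : u ∈ Λ.LStar := by
  rcases eq_or_ne u [] with rfl | hu
  · exact aux_nil_LStar Λ
  rcases h with h | h
  · simp at h; exact absurd h.2 hu
  · rcases eq_or_ne w [] with rfl | hw
    · rw [List.nil_append] at h; exact Or.inr h
    · exact Or.inr (aux_IsPathLabel_append_right Λ h hu)

theorem aux_prefix_LStar {w v : List A} (h : v ∈ Λ.LStar) (hp : w <+: v) : w ∈ Λ.LStar := by
  obtain ⟨t, rfl⟩ := hp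
  exact aux_LStar_append_left Λ h

end AuxGraph

end LblSp

/-! ### Auxiliary semigroup and filter lemmas -/

namespace LblSp

section AuxFilter

variable {V : Type u} {Ed : Type v} {A : Type w} (Λ : LblSp V Ed A)

theorem aux_mk_ne_zero {w w' : List A} {X : Set V} : (Tr.mk w X w' : Tr V A) ≠ Tr.zero := by
  simp

theorem aux_mk_mem_ESet {w : List A} {X : Set V} :
    Tr.mk w X w ∈ Λ.ESet ↔ w ∈ Λ.LStar ∧ X ∈ Λ.Aset w ∧ X.Nonempty := by
  constructor
  · rintro (h | ⟨α, X', h, hα, hX, hne⟩)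
    · exact absurd h (by simp)
    · rw [Tr.mk.injEq] at h
      obtain ⟨rfl, rfl, -⟩ := h
      exact ⟨hα, hX, hne⟩
  · rintro ⟨h1, h2, h3⟩
    exact Or.inr ⟨w, X, rfl, h1, h2, h3⟩

theorem aux_tmul_same (w : List A) (X Y : Set V) :
    Λ.tmul (Tr.mk w X w) (Tr.mk w Y w) =
      if (X ∩ Y).Nonempty then Tr.mk w (X ∩ Y) w else Tr.zero := by
  simp only [tmul, List.drop_length, aux_relRange_nil, List.append_nil, List.prefix_refl,
    true_and]
  by_cases h : (X ∩ Y).Nonempty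
  · rw [if_pos h, if_pos h]
  · rw [if_neg h, if_neg h]

theorem aux_ne_nil_append {w u : List A} (hu : u ≠ []) : ¬(w ++ u <+: w) := by
  intro h
  have := h.length_le
  simp only [List.length_append] at this
  have hu0 : u.length = 0 := by omega
  exact hu (List.length_eq_zero_iff.mp hu0)

theorem aux_tmul_up1 {u : List A} (hu : u ≠ []) (w : List A) (X Y : Set V) :
    Λ.tmul (Tr.mk w X w) (Tr.mk (w ++ u) Y (w ++ u)) =
      if (Λ.relRange X u ∩ Y).Nonempty then Tr.mk (w ++ u) (Λ.relRange X u ∩ Y) (w ++ u)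
      else Tr.zero := by
  simp only [tmul, List.drop_left, List.prefix_append, true_and]
  by_cases h : (Λ.relRange X u ∩ Y).Nonempty
  · rw [if_pos h, if_pos h]
  · rw [if_neg h, if_neg (fun hc => aux_ne_nil_append hu hc.1), if_neg h]

theorem aux_tmul_up2 {u : List A} (hu : u ≠ []) (w : List A) (X Y : Set V) :
    Λ.tmul (Tr.mk (w ++ u) X (w ++ u)) (Tr.mk w Y w) =
      if (X ∩ Λ.relRange Y u).Nonempty then Tr.mk (w ++ u) (X ∩ Λ.relRange Y u) (w ++ u)
      else Tr.zero := by
  simp only [tmul, List.drop_left, List.prefix_append, true_and]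
  rw [if_neg (fun hc => aux_ne_nil_append hu hc.1)]

theorem aux_tmul_zero {β δ : List A} (h1 : ¬β <+: δ) (h2 : ¬δ <+: β) (X Y : Set V) :
    Λ.tmul (Tr.mk β X β) (Tr.mk δ Y δ) = Tr.zero := by
  simp only [tmul]
  rw [if_neg (fun hc => h1 hc.1), if_neg (fun hc => h2 hc.1)]

variable {Λ}

theorem aux_mem_shape {ξ : Set (Tr V A)} (hF : Λ.IsFilterES ξ) {t : Tr V A} (ht : t ∈ ξ) :
    ∃ w B, t = Tr.mk w B w ∧ w ∈ Λ.LStar ∧ B ∈ Λ.Aset w ∧ B.Nonempty := by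
  obtain ⟨hE, hnz⟩ := hF.2.1 t ht
  rcases hE with h | ⟨α, X, rfl, hα, hX, hne⟩
  · exact absurd h hnz
  · exact ⟨α, X, rfl, hα, hX, hne⟩

theorem aux_mk_mem {ξ : Set (Tr V A)} (hF : Λ.IsFilterES ξ) {w : List A} {B : Set V}
    (ht : Tr.mk w B w ∈ ξ) : w ∈ Λ.LStar ∧ B ∈ Λ.Aset w ∧ B.Nonempty :=
  (aux_mk_mem_ESet Λ).mp (hF.2.1 _ ht).1

theorem aux_zero_not_mem {ξ : Set (Tr V A)} (hF : Λ.IsFilterES ξ) : Tr.zero ∉ ξ :=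
  fun h => (hF.2.1 _ h).2 rfl

theorem aux_filter_inter {ξ : Set (Tr V A)} (hF : Λ.IsFilterES ξ) {w : List A} {X Y : Set V}
    (h1 : Tr.mk w X w ∈ ξ) (h2 : Tr.mk w Y w ∈ ξ) : Tr.mk w (X ∩ Y) w ∈ ξ := by
  have hm := hF.2.2.1 _ h1 _ h2
  rw [aux_tmul_same] at hm
  by_cases h : (X ∩ Y).Nonempty
  · rwa [if_pos h] at hm
  · rw [if_neg h] at hm
    exact absurd hm (aux_zero_not_mem hF)

theorem aux_filter_up {ξ : Set (Tr V A)} (hF : Λ.IsFilterES ξ) {w : List A} {D B : Set V}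
    (hD : Tr.mk w D w ∈ ξ) (hsub : D ⊆ B) (hB : B ∈ Λ.𝒜) (hBr : B ⊆ Λ.rangeL w) :
    Tr.mk w B w ∈ ξ := by
  obtain ⟨hwL, hDA, hDne⟩ := aux_mk_mem hF hD
  apply hF.2.2.2 _ hD _ ((aux_mk_mem_ESet Λ).mpr ⟨hwL, ⟨hB, hBr⟩, hDne.mono hsub⟩)
  rw [aux_tmul_same, Set.inter_eq_left.mpr hsub, if_pos hDne]

theorem aux_filter_comparable {ξ : Set (Tr V A)} (hF : Λ.IsFilterES ξ) {β δ : List A}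
    {B C : Set V} (h1 : Tr.mk β B β ∈ ξ) (h2 : Tr.mk δ C δ ∈ ξ) : β <+: δ ∨ δ <+: β := by
  by_contra hc
  push_neg at hc
  have hm := hF.2.2.1 _ h1 _ h2
  rw [aux_tmul_zero Λ hc.1 hc.2] at hm
  exact aux_zero_not_mem hF hm

theorem aux_filter_prefix_range {ξ : Set (Tr V A)} (hF : Λ.IsFilterES ξ) (hLS : Λ.IsLS)
    {w u : List A} {C : Set V} (hC : Tr.mk (w ++ u) C (w ++ u) ∈ ξ) (hw : w ≠ []) :
    Tr.mk w (Λ.rangeL w) w ∈ ξ := by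
  obtain ⟨hwuL, hCA, hCne⟩ := aux_mk_mem hF hC
  have hwL : w ∈ Λ.LStar := aux_LStar_append_left Λ hwuL
  have hrA : Λ.rangeL w ∈ Λ.𝒜 := hLS.range_mem w hwL hw
  have hCsub : C ⊆ Λ.relRange (Λ.rangeL w) u := by
    rw [← aux_rangeL_append]; exact hCA.2
  have hrne : (Λ.rangeL w).Nonempty := aux_relRange_nonempty Λ (hCne.mono hCsub)
  apply hF.2.2.2 _ hC _ ((aux_mk_mem_ESet Λ).mpr ⟨hwL, ⟨hrA, subset_rfl⟩, hrne⟩)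
  rcases eq_or_ne u [] with rfl | hu
  · rw [aux_relRange_nil] at hCsub
    simp only [List.append_nil]
    rw [aux_tmul_same, Set.inter_eq_left.mpr hCsub, if_pos hCne]
  · rw [aux_tmul_up2 Λ hu, Set.inter_eq_left.mpr hCsub, if_pos hCne]

theorem aux_filter_prefix_elt {ξ : Set (Tr V A)} (hF : Λ.IsFilterES ξ) (hLS : Λ.IsLS)
    {v w : List A} {C : Set V} (hC : Tr.mk v C v ∈ ξ) (hp : w <+: v) (hw : w ≠ []) :
    ∃ C', Tr.mk w C' w ∈ ξ := by
  obtain ⟨u, rfl⟩ := hp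
  exact ⟨_, aux_filter_prefix_range hF hLS hC hw⟩

theorem aux_filter_step_up {ξ : Set (Tr V A)} (hF : Λ.IsFilterES ξ) (hLS : Λ.IsLS)
    {w : List A} {a : A} {B C : Set V} (hB : Tr.mk w B w ∈ ξ)
    (hex : Tr.mk (w ++ [a]) C (w ++ [a]) ∈ ξ) :
    Tr.mk (w ++ [a]) (Λ.relRange B [a]) (w ++ [a]) ∈ ξ := by
  obtain ⟨hwL, hBA, hBne⟩ := aux_mk_mem hF hB
  obtain ⟨hwaL, hCA, hCne⟩ := aux_mk_mem hF hex
  have hm := hF.2.2.1 _ hB _ hex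
  rw [aux_tmul_up1 Λ (by simp) w B C] at hm
  by_cases h : (Λ.relRange B [a] ∩ C).Nonempty
  · rw [if_pos h] at hm
    apply aux_filter_up hF hm Set.inter_subset_left
    · exact hLS.relRange_mem B hBA.1 [a] (aux_LStar_append_right Λ hwaL)
    · exact aux_relRange_subset_rangeL Λ hBA.2 [a]
  · rw [if_neg h] at hm
    exact absurd hm (aux_zero_not_mem hF)

theorem aux_filter_step_down {ξ : Set (Tr V A)} (hF : Λ.IsFilterES ξ)
    {w : List A} {a : A} {B : Set V} (hB : B ∈ Λ.𝒜) (hBr : B ⊆ Λ.rangeL w)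
    (h : Tr.mk (w ++ [a]) (Λ.relRange B [a]) (w ++ [a]) ∈ ξ) : Tr.mk w B w ∈ ξ := by
  obtain ⟨hwaL, hrA, hrne⟩ := aux_mk_mem hF h
  apply hF.2.2.2 _ h _ ((aux_mk_mem_ESet Λ).mpr
    ⟨aux_LStar_append_left Λ hwaL, ⟨hB, hBr⟩, aux_relRange_nonempty Λ hrne⟩)
  rw [aux_tmul_up2 Λ (by simp), Set.inter_self, if_pos hrne]

theorem aux_level_iff {ξ : Set (Tr V A)} (hF : Λ.IsFilterES ξ) (hLS : Λ.IsLS)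
    {u : List A} : ∀ {w : List A} {B : Set V},
    (∃ C₀, Tr.mk (w ++ u) C₀ (w ++ u) ∈ ξ) → B ∈ Λ.𝒜 → B ⊆ Λ.rangeL w →
    (Tr.mk w B w ∈ ξ ↔ Tr.mk (w ++ u) (Λ.relRange B u) (w ++ u) ∈ ξ) := by
  induction u with
  | nil =>
    intro w B _ _ _
    simp only [List.append_nil, aux_relRange_nil]
  | cons a u' ih =>
    intro w B hex hB hBr
    obtain ⟨C₀, hC₀⟩ := hex
    have hassoc : w ++ a :: u' = (w ++ [a]) ++ u' := by simp
    have hC₀' : Tr.mk ((w ++ [a]) ++ u') C₀ ((w ++ [a]) ++ u') ∈ ξ := by rwa [← hassoc]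
    obtain ⟨C1, hC1⟩ := aux_filter_prefix_elt hF hLS hC₀' (List.prefix_append _ _) (by simp)
    have hwaL : w ++ [a] ∈ Λ.LStar := (aux_mk_mem hF hC1).1
    have haL : [a] ∈ Λ.LStar := aux_LStar_append_right Λ hwaL
    have hBa : Λ.relRange B [a] ∈ Λ.𝒜 := hLS.relRange_mem B hB [a] haL
    have hBar : Λ.relRange B [a] ⊆ Λ.rangeL (w ++ [a]) := aux_relRange_subset_rangeL Λ hBr [a]
    have step : Tr.mk w B w ∈ ξ ↔ Tr.mk (w ++ [a]) (Λ.relRange B [a]) (w ++ [a]) ∈ ξ :=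
      ⟨fun h => aux_filter_step_up hF hLS h hC1, fun h => aux_filter_step_down hF hB hBr h⟩
    rw [step, ih ⟨C₀, hC₀'⟩ hBa hBar]
    have hcomp : Λ.relRange B (a :: u') = Λ.relRange (Λ.relRange B [a]) u' := by
      rw [show (a :: u' : List A) = [a] ++ u' from rfl, aux_relRange_comp]
    rw [hassoc, hcomp]

end AuxFilter

end LblSp

/-! ### Word existence and merging -/

namespace LblSp

section AuxWordEx

variable {V : Type u} {Ed : Type v} {A : Type w} {Λ : LblSp V Ed A}

theorem aux_hasWord_unique {ξ : Set (Tr V A)} {α α' : Word A}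
    (h1 : Λ.HasWord ξ α) (h2 : Λ.HasWord ξ α') : α = α' :=
  aux_word_unique fun β hβ => ((h1 β hβ).symm.trans (h2 β hβ))

theorem aux_exists_word {ξ : Set (Tr V A)} (hF : Λ.IsFilterES ξ) (hLS : Λ.IsLS) :
    ∃ α : Word A, Λ.HasWord ξ α := by
  classical
  set P : Set (List A) := {β | ∃ B, Tr.mk β B β ∈ ξ} with hP
  have hchain : ∀ β ∈ P, ∀ δ ∈ P, β <+: δ ∨ δ <+: β := by
    rintro β ⟨B, hB⟩ δ ⟨C, hC⟩
    exact aux_filter_comparable hF hB hC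
  have hpfx : ∀ β ∈ P, ∀ w, w <+: β → w ≠ [] → w ∈ P := by
    rintro β ⟨B, hB⟩ w hw hwne
    obtain ⟨C', hC'⟩ := aux_filter_prefix_elt hF hLS hB hw hwne
    exact ⟨C', hC'⟩
  have hne : P.Nonempty := by
    obtain ⟨t, ht⟩ := hF.1
    obtain ⟨w, B, rfl, -, -, -⟩ := aux_mem_shape hF ht
    exact ⟨w, B, ht⟩
  by_cases hbd : ∃ β ∈ P, ∀ δ ∈ P, δ.length ≤ β.length
  · obtain ⟨β, hβP, hβmax⟩ := hbd
    refine ⟨Sum.inl β, ?_⟩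
    intro β' hβ'
    show (∃ B, Tr.mk β' B β' ∈ ξ) ↔ WPrefix β' (Sum.inl β)
    show (∃ B, Tr.mk β' B β' ∈ ξ) ↔ β' <+: β
    constructor
    · intro hβ'P
      rcases hchain β' hβ'P β hβP with h | h
      · exact h
      · obtain rfl := h.eq_of_length_le (hβmax β' hβ'P)
        exact List.prefix_refl (l := β)
    · intro h
      exact hpfx β hβP β' h hβ'
  · push_neg at hbd
    have long : ∀ n : ℕ, ∃ δ ∈ P, n < δ.length := by
      intro n
      induction n with
      | zero =>
        obtain ⟨β₀, hβ₀⟩ := hne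
        obtain ⟨δ, hδ, hlt⟩ := hbd β₀ hβ₀
        exact ⟨δ, hδ, by omega⟩
      | succ k ih =>
        obtain ⟨δ, hδ, hlt⟩ := ih
        obtain ⟨δ', hδ', hlt'⟩ := hbd δ hδ
        exact ⟨δ', hδ', by omega⟩
    choose D hDP hDlen using long
    have agree : ∀ γ ∈ P, ∀ i, ∀ (h : i < γ.length), γ[i] = (D i)[i]'(hDlen i) := by
      intro γ hγ i h
      rcases hchain γ hγ (D i) (hDP i) with hc | hc
      · exact hc.getElem h
      · exact (hc.getElem (hDlen i)).symm
    refine ⟨Sum.inr (fun n => (D n)[n]'(hDlen n)), ?_⟩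
    intro β hβ
    show (∃ B, Tr.mk β B β ∈ ξ) ↔ WPrefix β (Sum.inr _)
    rw [aux_WPrefix_inr_iff]
    constructor
    · rintro ⟨B, hB⟩ i hi
      exact agree β ⟨B, hB⟩ i hi
    · intro h
      have hβpfx : β <+: D β.length := by
        rw [List.prefix_iff_eq_take]
        apply List.ext_getElem (by simp [Nat.le_of_lt (hDlen β.length)])
        intro i h1 h2
        rw [List.getElem_take]
        rw [h i h1]
        exact (agree (D β.length) (hDP _) i (h1.trans (hDlen β.length))).symm
      exact hpfx (D β.length) (hDP _) β hβpfx hβ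

theorem aux_merge₂' {ξ : Set (Tr V A)} (hF : Λ.IsFilterES ξ) (hLS : Λ.IsLS)
    {w u : List A} {B₁ B₂ : Set V}
    (h1 : Tr.mk w B₁ w ∈ ξ) (h2 : Tr.mk (w ++ u) B₂ (w ++ u) ∈ ξ) :
    ∃ e, e ∈ ξ ∧ ∀ ζ, Λ.IsFilterES ζ → e ∈ ζ →
      Tr.mk w B₁ w ∈ ζ ∧ Tr.mk (w ++ u) B₂ (w ++ u) ∈ ζ := by
  obtain ⟨hwL, hB1A, hB1ne⟩ := aux_mk_mem hF h1
  obtain ⟨hwuL, hB2A, hB2ne⟩ := aux_mk_mem hF h2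
  have huL : u ∈ Λ.LStar := aux_LStar_append_right Λ hwuL
  have hu𝒜 : Λ.relRange B₁ u ∈ Λ.𝒜 := hLS.relRange_mem _ hB1A.1 u huL
  have hur : Λ.relRange B₁ u ⊆ Λ.rangeL (w ++ u) := aux_relRange_subset_rangeL Λ hB1A.2 u
  have hpush : Tr.mk (w ++ u) (Λ.relRange B₁ u) (w ++ u) ∈ ξ :=
    (aux_level_iff hF hLS ⟨B₂, h2⟩ hB1A.1 hB1A.2).mp h1
  refine ⟨Tr.mk (w ++ u) (Λ.relRange B₁ u ∩ B₂) (w ++ u), aux_filter_inter hF hpush h2, ?_⟩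
  intro ζ hζ he
  have h1' : Tr.mk (w ++ u) (Λ.relRange B₁ u) (w ++ u) ∈ ζ :=
    aux_filter_up hζ he Set.inter_subset_left hu𝒜 hur
  refine ⟨?_, aux_filter_up hζ he Set.inter_subset_right hB2A.1 hB2A.2⟩
  exact (aux_level_iff hζ hLS ⟨_, h1'⟩ hB1A.1 hB1A.2).mpr h1'

theorem aux_merge₂ {ξ : Set (Tr V A)} (hF : Λ.IsFilterES ξ) (hLS : Λ.IsLS)
    {t₁ t₂ : Tr V A} (h1 : t₁ ∈ ξ) (h2 : t₂ ∈ ξ) :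
    ∃ e, e ∈ ξ ∧ ∀ ζ, Λ.IsFilterES ζ → e ∈ ζ → t₁ ∈ ζ ∧ t₂ ∈ ζ := by
  obtain ⟨β₁, B₁, rfl, -, -, -⟩ := aux_mem_shape hF h1
  obtain ⟨β₂, B₂, rfl, -, -, -⟩ := aux_mem_shape hF h2
  rcases aux_filter_comparable hF h1 h2 with hc | hc
  · obtain ⟨u, rfl⟩ := hc
    exact aux_merge₂' hF hLS h1 h2
  · obtain ⟨u, rfl⟩ := hc
    obtain ⟨e, he, hp⟩ := aux_merge₂' hF hLS h2 h1
    exact ⟨e, he, fun ζ hζ he' => (hp ζ hζ he').symm⟩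

theorem aux_merge_list {ξ : Set (Tr V A)} (hF : Λ.IsFilterES ξ) (hLS : Λ.IsLS)
    (ts : List (Tr V A)) (hts : ∀ t ∈ ts, t ∈ ξ) :
    ∃ e, e ∈ ξ ∧ ∀ ζ, Λ.IsFilterES ζ → e ∈ ζ → ∀ t ∈ ts, t ∈ ζ := by
  induction ts with
  | nil =>
    obtain ⟨e, he⟩ := hF.1
    exact ⟨e, he, fun ζ _ _ t ht => absurd ht List.not_mem_nil⟩
  | cons t ts ih =>
    obtain ⟨e', he', hrec⟩ := ih (fun t' ht' => hts t' (List.mem_cons_of_mem _ ht'))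
    obtain ⟨e, he, hp⟩ := aux_merge₂ hF hLS (hts t List.mem_cons_self) he'
    refine ⟨e, he, fun ζ hζ he2 t' ht' => ?_⟩
    rcases List.mem_cons.mp ht' with rfl | ht'
    · exact (hp ζ hζ he2).1
    · exact hrec ζ hζ (hp ζ hζ he2).2 t' ht'

end AuxWordEx

end LblSp

/-! ### Hcut lemmas, the shift, transfer and injectivity -/

namespace LblSp

section AuxHcut

variable {V : Type u} {Ed : Type v} {A : Type w} {Λ : LblSp V Ed A}

theorem aux_Hcut_nil (ξ : Set (Tr V A)) : Λ.Hcut [] ξ = ξ := if_pos rfl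

theorem aux_mem_Hcut_iff {μ : List A} (hμ : μ ≠ []) {ξ : Set (Tr V A)} {t : Tr V A} :
    t ∈ Λ.Hcut μ ξ ↔ ∃ δ B, t = Tr.mk δ B δ ∧ B ∈ Λ.Aset δ ∧
      ∃ D, Tr.mk (μ ++ δ) D (μ ++ δ) ∈ ξ ∧ D ⊆ B := by
  rw [Hcut, if_neg hμ]; rfl

theorem aux_mk_mem_Hcut_iff {ξ : Set (Tr V A)} (hF : Λ.IsFilterES ξ) {μ δ : List A}
    {C : Set V} : Tr.mk δ C δ ∈ Λ.Hcut μ ξ ↔ C ∈ Λ.Aset δ ∧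
      ∃ D, Tr.mk (μ ++ δ) D (μ ++ δ) ∈ ξ ∧ D ⊆ C := by
  rcases eq_or_ne μ [] with rfl | hμ
  · rw [aux_Hcut_nil]
    simp only [List.nil_append]
    constructor
    · intro h
      obtain ⟨-, hC, -⟩ := aux_mk_mem hF h
      exact ⟨hC, C, h, subset_rfl⟩
    · rintro ⟨hC, D, hD, hsub⟩
      exact aux_filter_up hF hD hsub hC.1 hC.2
  · rw [aux_mem_Hcut_iff hμ]
    constructor
    · rintro ⟨δ', B', heq, hB', D, hD, hsub⟩
      rw [Tr.mk.injEq] at heq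
      obtain ⟨rfl, rfl, -⟩ := heq
      exact ⟨hB', D, hD, hsub⟩
    · rintro ⟨hC, D, hD, hsub⟩
      exact ⟨δ, C, rfl, hC, D, hD, hsub⟩

theorem aux_Hcut_elem {ξ : Set (Tr V A)} (hE : ∀ t ∈ ξ, t ∈ Λ.ESet ∧ t ≠ Tr.zero)
    (μ : List A) : ∀ t ∈ Λ.Hcut μ ξ, t ∈ Λ.ESet ∧ t ≠ Tr.zero := by
  rcases eq_or_ne μ [] with rfl | hμ
  · rw [aux_Hcut_nil]; exact hE
  · intro t ht
    rw [aux_mem_Hcut_iff hμ] at ht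
    obtain ⟨δ, B, rfl, hB, D, hD, hsub⟩ := ht
    have hED := (aux_mk_mem_ESet Λ).mp (hE _ hD).1
    exact ⟨(aux_mk_mem_ESet Λ).mpr
      ⟨aux_LStar_append_right Λ hED.1, hB, hED.2.2.mono hsub⟩, aux_mk_ne_zero⟩

theorem aux_Hcut_comp {ξ : Set (Tr V A)} (hE : ∀ t ∈ ξ, t ∈ Λ.ESet ∧ t ≠ Tr.zero)
    (μ δ₀ : List A) : Λ.Hcut δ₀ (Λ.Hcut μ ξ) = Λ.Hcut (μ ++ δ₀) ξ := by
  rcases eq_or_ne δ₀ [] with rfl | hδ₀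
  · rw [aux_Hcut_nil, List.append_nil]
  rcases eq_or_ne μ [] with rfl | hμ
  · rw [aux_Hcut_nil, List.nil_append]
  have hμδ : μ ++ δ₀ ≠ [] := by simp [hμ]
  ext t
  rw [aux_mem_Hcut_iff hδ₀, aux_mem_Hcut_iff hμδ]
  constructor
  · rintro ⟨w, B, rfl, hB, D, hD, hsub⟩
    rw [aux_mem_Hcut_iff hμ] at hD
    obtain ⟨w', D', heq, hD'A, D'', hD'', hsub'⟩ := hD
    rw [Tr.mk.injEq] at heq
    obtain ⟨rfl, rfl, -⟩ := heq
    refine ⟨w, B, rfl, hB, D'', ?_, hsub'.trans hsub⟩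
    rwa [List.append_assoc]
  · rintro ⟨w, B, rfl, hB, D, hD, hsub⟩
    rw [List.append_assoc] at hD
    have hED := (aux_mk_mem_ESet Λ).mp (hE _ hD).1
    refine ⟨w, B, rfl, hB, D, ?_, hsub⟩
    rw [aux_mem_Hcut_iff hμ]
    exact ⟨δ₀ ++ w, D, rfl,
      ⟨hED.2.1.1, hED.2.1.2.trans (aux_rangeL_append_subset Λ μ (δ₀ ++ w))⟩, D, hD, subset_rfl⟩

theorem aux_Hcut_hasWord {ξ : Set (Tr V A)} (hE : ∀ t ∈ ξ, t ∈ Λ.ESet ∧ t ≠ Tr.zero)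
    {μ : List A} {γ : Word A} (hw : Λ.HasWord ξ (wappend μ γ)) :
    Λ.HasWord (Λ.Hcut μ ξ) γ := by
  rcases eq_or_ne μ [] with rfl | hμ
  · rw [aux_Hcut_nil]
    rwa [aux_wappend_nil] at hw
  · intro β hβ
    have h1 : (∃ B, Tr.mk β B β ∈ Λ.Hcut μ ξ) ↔ ∃ D, Tr.mk (μ ++ β) D (μ ++ β) ∈ ξ := by
      constructor
      · rintro ⟨B, hB⟩
        rw [aux_mem_Hcut_iff hμ] at hB
        obtain ⟨δ', B', heqq, hB', D, hD, hsub⟩ := hB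
        rw [Tr.mk.injEq] at heqq
        obtain ⟨rfl, rfl, -⟩ := heqq
        exact ⟨D, hD⟩
      · rintro ⟨D, hD⟩
        have hED := (aux_mk_mem_ESet Λ).mp (hE _ hD).1
        refine ⟨D, ?_⟩
        rw [aux_mem_Hcut_iff hμ]
        exact ⟨β, D, rfl,
          ⟨hED.2.1.1, hED.2.1.2.trans (aux_rangeL_append_subset Λ μ β)⟩, D, hD, subset_rfl⟩
    rw [h1, hw (μ ++ β) (by simp [hμ]), aux_WPrefix_wappend_iff]

theorem aux_word_prefix_LStar {ξ : Set (Tr V A)} (hF : Λ.IsFilterES ξ) {μ : List A}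
    {γ : Word A} (hw : Λ.HasWord ξ (wappend μ γ)) : μ ∈ Λ.LStar := by
  rcases eq_or_ne μ [] with rfl | hμ
  · exact aux_nil_LStar Λ
  · obtain ⟨C, hC⟩ := (hw μ hμ).mpr (aux_WPrefix_wappend_self μ γ)
    exact (aux_mk_mem hF hC).1

theorem aux_sigma_iterate {ξ : Set (Tr V A)} (hE : ∀ t ∈ ξ, t ∈ Λ.ESet ∧ t ≠ Tr.zero)
    {μ : List A} {γ : Word A} (hw : Λ.HasWord ξ (wappend μ γ)) :
    (Λ.sigmaMap)^[μ.length] ξ = Λ.Hcut μ ξ := by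
  induction μ generalizing ξ with
  | nil => rw [aux_Hcut_nil]; rfl
  | cons a μ' ih =>
    have hwa : WPrefix [a] (wappend (a :: μ') γ) :=
      aux_WPrefix_of_prefix ⟨μ', rfl⟩ (aux_WPrefix_wappend_self (a :: μ') γ)
    have hex : ∃ b : A, ∃ B, Tr.mk [b] B [b] ∈ ξ := by
      obtain ⟨B, hB⟩ := (hw [a] (by simp)).mpr hwa
      exact ⟨a, B, hB⟩
    have hc : Λ.sigmaMap ξ = Λ.Hcut [hex.choose] ξ := dif_pos hex
    have ha : hex.choose = a := by
      obtain ⟨B, hB⟩ := hex.choose_spec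
      exact aux_WPrefix_singleton ((hw [hex.choose] (by simp)).mp ⟨B, hB⟩)
    have hc' : Λ.sigmaMap ξ = Λ.Hcut [a] ξ := by rw [hc, ha]
    have hwsplit : wappend (a :: μ') γ = wappend [a] (wappend μ' γ) := by
      rw [← aux_wappend_assoc]; rfl
    have hw' : Λ.HasWord (Λ.Hcut [a] ξ) (wappend μ' γ) :=
      aux_Hcut_hasWord hE (by rwa [hwsplit] at hw)
    have hE' := aux_Hcut_elem hE [a]
    rw [show (a :: μ').length = μ'.length + 1 from rfl, Function.iterate_succ_apply, hc',
      ih hE' hw', aux_Hcut_comp hE]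
    rfl

/-- The core of the translation map. -/
noncomputable def auxTrCore (Λ : LblSp V Ed A) (μ ν δ : List A) (B : Set V) : Tr V A :=
  if ν ++ δ = [] then Tr.mk [] B []
  else Tr.mk (ν ++ δ) (Λ.rangeL (ν ++ δ) \ (Λ.rangeL (μ ++ δ) \ B)) (ν ++ δ)

/-- The translation map sending conditions on the first leg to conditions on the
second leg of an element of `Γ`. -/
noncomputable def auxTr (Λ : LblSp V Ed A) (μ ν : List A) : Tr V A → Tr V A
  | Tr.zero => Tr.zero
  | Tr.mk β B _ =>
    if β.length ≤ μ.length then auxTrCore Λ μ ν [] (Λ.relRange B (μ.drop β.length))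
    else auxTrCore Λ μ ν (β.drop μ.length) B

/-- Goodness of a condition relative to the word `μ`. -/
def auxGood (Λ : LblSp V Ed A) (μ : List A) (t : Tr V A) : Prop :=
  t ∈ Λ.ESet ∧ ∃ β B, t = Tr.mk β B β ∧ β.take μ.length = μ.take β.length

theorem aux_transfer (hN : Λ.IsNormal) {η ξ : Set (Tr V A)} (hFη : Λ.IsFilterES η)
    (hFξ : Λ.IsFilterES ξ) {μ ν : List A} (heq : Λ.Hcut μ η = Λ.Hcut ν ξ)
    {δ : List A} {B : Set V} (hB : B ∈ Λ.𝒜) (hBr : B ⊆ Λ.rangeL (μ ++ δ)) :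
    (Tr.mk (μ ++ δ) B (μ ++ δ) ∈ η ↔ auxTrCore Λ μ ν δ B ∈ ξ) := by
  have hLS := hN.toIsWLR.toIsLS
  have hBδ : B ∈ Λ.Aset δ := ⟨hB, hBr.trans (aux_rangeL_append_subset Λ μ δ)⟩
  rw [auxTrCore]
  by_cases hνδ : ν ++ δ = []
  · rw [if_pos hνδ]
    obtain ⟨hν, hδ⟩ := List.append_eq_nil_iff.mp hνδ
    subst hν; subst hδ
    constructor
    · intro ht
      have h1 : Tr.mk ([] : List A) B [] ∈ Λ.Hcut μ η := by
        rw [aux_mk_mem_Hcut_iff hFη]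
        exact ⟨⟨hB, by rw [aux_rangeL_nil]; exact Set.subset_univ B⟩, B, ht, subset_rfl⟩
      rwa [heq, aux_Hcut_nil] at h1
    · intro ht
      have h1 : Tr.mk ([] : List A) B [] ∈ Λ.Hcut μ η := by
        rw [heq, aux_Hcut_nil]; exact ht
      rw [aux_mk_mem_Hcut_iff hFη] at h1
      obtain ⟨-, D, hD, hsub⟩ := h1
      exact aux_filter_up hFη hD hsub hB hBr
  · rw [if_neg hνδ]
    constructor
    · intro ht
      have h1 : Tr.mk δ B δ ∈ Λ.Hcut μ η := by
        rw [aux_mk_mem_Hcut_iff hFη]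
        exact ⟨hBδ, B, ht, subset_rfl⟩
      rw [heq, aux_mk_mem_Hcut_iff hFξ] at h1
      obtain ⟨-, D₂, hD₂, hsub₂⟩ := h1
      obtain ⟨hνδL, hD₂A, hD₂ne⟩ := aux_mk_mem hFξ hD₂
      have hμδL : μ ++ δ ∈ Λ.LStar := (aux_mk_mem hFη ht).1
      have hG𝒜 : Λ.rangeL (ν ++ δ) \ (Λ.rangeL (μ ++ δ) \ B) ∈ Λ.𝒜 := by
        rcases eq_or_ne (μ ++ δ) [] with hμδ | hμδ
        · rw [hμδ, aux_rangeL_nil]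
          have hGeq : Λ.rangeL (ν ++ δ) \ (Set.univ \ B) = Λ.rangeL (ν ++ δ) ∩ B := by
            ext x; simp only [Set.mem_diff, Set.mem_univ, true_and, not_not, Set.mem_inter_iff]
          rw [hGeq]
          exact hLS.inter_mem _ (hLS.range_mem _ hνδL hνδ) _ hB
        · exact hN.sdiff_mem _ (hLS.range_mem _ hνδL hνδ) _
            (hN.sdiff_mem _ (hLS.range_mem _ hμδL hμδ) _ hB)
      have hsubG : D₂ ⊆ Λ.rangeL (ν ++ δ) \ (Λ.rangeL (μ ++ δ) \ B) := by
        intro x hx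
        refine ⟨hD₂A.2 hx, ?_⟩
        rintro ⟨-, hxB⟩
        exact hxB (hsub₂ hx)
      exact aux_filter_up hFξ hD₂ hsubG hG𝒜 Set.diff_subset
    · intro ht
      obtain ⟨hνδL, hGA, hGne⟩ := aux_mk_mem hFξ ht
      have h1 : Tr.mk δ (Λ.rangeL (ν ++ δ) \ (Λ.rangeL (μ ++ δ) \ B)) δ ∈ Λ.Hcut ν ξ := by
        rw [aux_mk_mem_Hcut_iff hFξ]
        exact ⟨⟨hGA.1, hGA.2.trans (aux_rangeL_append_subset Λ ν δ)⟩, _, ht, subset_rfl⟩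
      rw [← heq, aux_mk_mem_Hcut_iff hFη] at h1
      obtain ⟨-, D₁, hD₁, hsub₁⟩ := h1
      have hsubB : D₁ ⊆ B := by
        intro x hx
        have hxr : x ∈ Λ.rangeL (μ ++ δ) := (aux_mk_mem hFη hD₁).2.1.2 hx
        by_contra hxB
        exact (hsub₁ hx).2 ⟨hxr, hxB⟩
      exact aux_filter_up hFη hD₁ hsubB hB hBr

theorem aux_mem_good {η : Set (Tr V A)} (hFη : Λ.IsFilterES η) {μ : List A} {γ : Word A}
    (hw : Λ.HasWord η (wappend μ γ)) {t : Tr V A} (ht : t ∈ η) : auxGood Λ μ t := by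
  obtain ⟨β, B, rfl, hβL, hBA, hBne⟩ := aux_mem_shape hFη ht
  refine ⟨(hFη.2.1 _ ht).1, β, B, rfl, ?_⟩
  rcases eq_or_ne β [] with rfl | hβ
  · simp
  · have hwp : WPrefix β (wappend μ γ) := (hw β hβ).mp ⟨B, ht⟩
    rcases le_or_gt β.length μ.length with hle | hgt
    · rw [List.take_of_length_le hle]
      exact aux_WPrefix_take hwp hle
    · obtain ⟨hβ2, -⟩ := aux_WPrefix_drop hwp hgt.le
      rw [List.take_of_length_le hgt.le]
      conv_lhs => rw [hβ2]
      rw [List.take_append_of_le_length le_rfl, List.take_of_length_le le_rfl]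

theorem aux_transl_iff (hN : Λ.IsNormal) {η ξ : Set (Tr V A)} (hFη : Λ.IsFilterES η)
    (hFξ : Λ.IsFilterES ξ) {μ ν : List A} {γ : Word A}
    (hwη : Λ.HasWord η (wappend μ γ)) (hwξ : Λ.HasWord ξ (wappend ν γ))
    (heq : Λ.Hcut μ η = Λ.Hcut ν ξ) {t : Tr V A} (hg : auxGood Λ μ t) :
    (t ∈ η ↔ auxTr Λ μ ν t ∈ ξ) := by
  have hLS := hN.toIsWLR.toIsLS
  obtain ⟨htE, β, B, rfl, hcompat⟩ := hg
  obtain ⟨hβL, hBA, hBne⟩ := (aux_mk_mem_ESet Λ).mp htE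
  have hμL : μ ∈ Λ.LStar := aux_word_prefix_LStar hFη hwη
  rcases le_or_gt β.length μ.length with hle | hgt
  · have hβt : β = μ.take β.length := by
      rw [List.take_of_length_le hle] at hcompat
      exact hcompat
    have hdec : μ = β ++ μ.drop β.length := by
      conv_lhs => rw [← List.take_append_drop β.length μ, ← hβt]
    have hstep : Tr.mk β B β ∈ η ↔
        Tr.mk μ (Λ.relRange B (μ.drop β.length)) μ ∈ η := by
      rcases eq_or_ne μ [] with rfl | hμne
      · have hβnil : β = [] := by
          simpa using List.length_eq_zero_iff.mp (by simpa using hle)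
        subst hβnil
        rw [show Λ.relRange B (List.drop [].length ([] : List A)) = B from by
          simp [aux_relRange_nil]]
      · have hex : ∃ C, Tr.mk μ C μ ∈ η := (hwη μ hμne).mpr (aux_WPrefix_wappend_self μ γ)
        have h := aux_level_iff hFη hLS (u := μ.drop β.length) (w := β) (B := B)
          (by rw [← hdec]; exact hex) hBA.1 hBA.2
        rwa [← hdec] at h
    have huL : μ.drop β.length ∈ Λ.LStar :=
      aux_LStar_append_right Λ (show β ++ μ.drop β.length ∈ Λ.LStar from hdec ▸ hμL)
    have h𝒜 : Λ.relRange B (μ.drop β.length) ∈ Λ.𝒜 :=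
      hLS.relRange_mem _ hBA.1 _ huL
    have hr : Λ.relRange B (μ.drop β.length) ⊆ Λ.rangeL (μ ++ []) := by
      rw [List.append_nil]
      conv_rhs => rw [hdec]
      exact aux_relRange_subset_rangeL Λ hBA.2 _
    have htr := aux_transfer hN hFη hFξ heq (δ := []) h𝒜 hr
    rw [List.append_nil] at htr
    rw [hstep, htr]
    rw [show auxTr Λ μ ν (Tr.mk β B β) =
      auxTrCore Λ μ ν [] (Λ.relRange B (μ.drop β.length)) from by
        simp only [auxTr]; rw [if_pos hle]]
  · have hμβ : β.take μ.length = μ := by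
      rw [hcompat, List.take_of_length_le hgt.le]
    have hdec : β = μ ++ β.drop μ.length := by
      conv_lhs => rw [← List.take_append_drop μ.length β, hμβ]
    have htr := aux_transfer hN hFη hFξ heq (δ := β.drop μ.length) hBA.1
      (by rw [← hdec]; exact hBA.2)
    rw [show auxTr Λ μ ν (Tr.mk β B β) = auxTrCore Λ μ ν (β.drop μ.length) B from by
      simp only [auxTr]; rw [if_neg (not_le.mpr hgt)]]
    conv_lhs => rw [hdec]
    exact htr

theorem aux_hcut_inj (hN : Λ.IsNormal) {η η' : Set (Tr V A)} (hFη : Λ.IsFilterES η)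
    (hFη' : Λ.IsFilterES η') {μ : List A} {γ γ' : Word A}
    (hwη : Λ.HasWord η (wappend μ γ)) (hwη' : Λ.HasWord η' (wappend μ γ'))
    (heq : Λ.Hcut μ η = Λ.Hcut μ η') : η = η' := by
  have hγ : γ = γ' := by
    have h1 := aux_Hcut_hasWord hFη.2.1 hwη
    have h2 := aux_Hcut_hasWord hFη'.2.1 hwη'
    rw [← heq] at h2
    exact aux_hasWord_unique h1 h2
  subst hγ
  ext t
  constructor
  · intro ht
    have hg := aux_mem_good hFη hwη ht
    exact (aux_transl_iff hN hFη' hFη' hwη' hwη' rfl hg).mpr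
      ((aux_transl_iff hN hFη hFη' hwη hwη' heq hg).mp ht)
  · intro ht
    have hg := aux_mem_good hFη' hwη' ht
    exact (aux_transl_iff hN hFη hFη' hwη hwη' heq hg).mpr
      ((aux_transl_iff hN hFη' hFη' hwη' hwη' rfl hg).mp ht)

theorem aux_exists_SSetX {η ξ : Set (Tr V A)} (hFη : Λ.IsFilterES η)
    (hFξ : Λ.IsFilterES ξ) {μ ν : List A} {γ : Word A}
    (hwη : Λ.HasWord η (wappend μ γ)) (hwξ : Λ.HasWord ξ (wappend ν γ))
    (heq : Λ.Hcut μ η = Λ.Hcut ν ξ) : ∃ X, Tr.mk μ X ν ∈ Λ.SSet := by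
  have hμL : μ ∈ Λ.LStar := aux_word_prefix_LStar hFη hwη
  have hνL : ν ∈ Λ.LStar := aux_word_prefix_LStar hFξ hwξ
  have hAnil : ∀ (C : Set V), C ∈ Λ.𝒜 → C ∈ Λ.Aset [] := fun C hC =>
    ⟨hC, by rw [aux_rangeL_nil]; exact Set.subset_univ C⟩
  rcases eq_or_ne μ [] with rfl | hμ
  · rcases eq_or_ne ν [] with rfl | hν
    · obtain ⟨t, ht⟩ := hFξ.1
      obtain ⟨w, C, rfl, -, hC, hCne⟩ := aux_mem_shape hFξ ht
      exact ⟨C, Or.inr ⟨[], C, [], rfl, hμL, hνL, hAnil C hC.1, hAnil C hC.1, hCne⟩⟩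
    · obtain ⟨D₂, hD₂⟩ := (hwξ ν hν).mpr (aux_WPrefix_wappend_self ν γ)
      obtain ⟨-, hD₂A, hD₂ne⟩ := aux_mk_mem hFξ hD₂
      exact ⟨D₂, Or.inr ⟨[], D₂, ν, rfl, hμL, hνL, hAnil D₂ hD₂A.1, hD₂A, hD₂ne⟩⟩
  · obtain ⟨D₁, hD₁⟩ := (hwη μ hμ).mpr (aux_WPrefix_wappend_self μ γ)
    obtain ⟨-, hD₁A, hD₁ne⟩ := aux_mk_mem hFη hD₁
    rcases eq_or_ne ν [] with rfl | hν
    · exact ⟨D₁, Or.inr ⟨μ, D₁, [], rfl, hμL, hνL, hD₁A, hAnil D₁ hD₁A.1, hD₁ne⟩⟩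
    · have h1 : Tr.mk ([] : List A) D₁ [] ∈ Λ.Hcut μ η := by
        rw [aux_mk_mem_Hcut_iff hFη]
        refine ⟨hAnil D₁ hD₁A.1, D₁, ?_, subset_rfl⟩
        rw [List.append_nil]; exact hD₁
      rw [heq, aux_mk_mem_Hcut_iff hFξ] at h1
      obtain ⟨-, D₂, hD₂, hsub⟩ := h1
      rw [List.append_nil] at hD₂
      obtain ⟨-, hD₂A, hD₂ne⟩ := aux_mk_mem hFξ hD₂
      exact ⟨D₂, Or.inr ⟨μ, D₂, ν, rfl, hμL, hνL,
        ⟨hD₂A.1, (hsub.trans hD₁A.2)⟩, hD₂A, hD₂ne⟩⟩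

end AuxHcut

end LblSp

/-! ### Topological plumbing on the tight filter space -/

namespace LblSp

section AuxTop

variable {V : Type u} {Ed : Type v} {A : Type w} {Λ : LblSp V Ed A}

theorem aux_charOf_eq_true_iff {ξ : Set (Tr V A)} {t : Tr V A} :
    Λ.charOf ξ t = true ↔ t ∈ ξ := by
  by_cases h : t ∈ ξ <;> simp [charOf, h]

theorem aux_continuous_eval (t : Tr V A) :
    Continuous fun ξ : Λ.TightT => Λ.charOf ξ.carrier t := by
  have h1 : Continuous fun ξ : Λ.TightT => Λ.charOf ξ.carrier := continuous_induced_dom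
  exact (continuous_apply t).comp h1

theorem aux_isOpen_coord_true (t : Tr V A) :
    IsOpen {ξ : Λ.TightT | t ∈ ξ.carrier} := by
  have : {ξ : Λ.TightT | t ∈ ξ.carrier}
      = (fun ξ : Λ.TightT => Λ.charOf ξ.carrier t) ⁻¹' {true} := by
    ext ξ
    simp [aux_charOf_eq_true_iff]
  rw [this]
  exact (aux_continuous_eval t).isOpen_preimage _ (isOpen_discrete _)

theorem aux_isOpen_coord_false (t : Tr V A) :
    IsOpen {ξ : Λ.TightT | t ∉ ξ.carrier} := by
  have : {ξ : Λ.TightT | t ∉ ξ.carrier}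
      = (fun ξ : Λ.TightT => Λ.charOf ξ.carrier t) ⁻¹' {false} := by
    ext ξ
    by_cases h : t ∈ ξ.carrier <;> simp [charOf, h]
  rw [this]
  exact (aux_continuous_eval t).isOpen_preimage _ (isOpen_discrete _)

theorem aux_isOpen_notmem_list (es : List (Tr V A)) :
    IsOpen {ξ : Λ.TightT | ∀ f ∈ es, f ∉ ξ.carrier} := by
  induction es with
  | nil => simp
  | cons f es ih =>
    have : {ξ : Λ.TightT | ∀ g ∈ f :: es, g ∉ ξ.carrier}
        = {ξ : Λ.TightT | f ∉ ξ.carrier} ∩ {ξ : Λ.TightT | ∀ g ∈ es, g ∉ ξ.carrier} := by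
      ext ξ
      simp [List.forall_mem_cons]
    rw [this]
    exact (aux_isOpen_coord_false f).inter ih

theorem aux_isOpen_prefix_slice (hN : Λ.IsNormal) (μ : List A) :
    IsOpen {ξ : Λ.TightT | ∃ γ : Word A, Λ.HasWord ξ.carrier (wappend μ γ)} := by
  have hLS := hN.toIsWLR.toIsLS
  rcases eq_or_ne μ [] with rfl | hμ
  · have : {ξ : Λ.TightT | ∃ γ : Word A, Λ.HasWord ξ.carrier (wappend [] γ)} = Set.univ := by
      ext ξ
      simp only [Set.mem_setOf_eq, Set.mem_univ, iff_true]
      obtain ⟨α, hα⟩ := aux_exists_word ξ.tight.1 hLS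
      exact ⟨α, by rwa [aux_wappend_nil]⟩
    rw [this]
    exact isOpen_univ
  · have : {ξ : Λ.TightT | ∃ γ : Word A, Λ.HasWord ξ.carrier (wappend μ γ)}
        = ⋃ B : Set V, {ξ : Λ.TightT | Tr.mk μ B μ ∈ ξ.carrier} := by
      ext ξ
      simp only [Set.mem_setOf_eq, Set.mem_iUnion]
      constructor
      · rintro ⟨γ, hw⟩
        exact (hw μ hμ).mpr (aux_WPrefix_wappend_self μ γ)
      · rintro ⟨B, hB⟩
        obtain ⟨α, hα⟩ := aux_exists_word ξ.tight.1 hLS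
        have hwp : WPrefix μ α := (hα μ hμ).mp ⟨B, hB⟩
        obtain ⟨γ, rfl⟩ := aux_WPrefix_split hwp
        exact ⟨γ, hα⟩
    rw [this]
    exact isOpen_iUnion fun B => aux_isOpen_coord_true (Tr.mk μ B μ)

theorem aux_nbhd_coords {S : Set Λ.TightT} (hS : IsOpen S) {x : Λ.TightT} (hx : x ∈ S) :
    ∃ I : Finset (Tr V A), ∀ y : Λ.TightT,
      (∀ t ∈ I, (t ∈ y.carrier ↔ t ∈ x.carrier)) → y ∈ S := by
  obtain ⟨O, hO, rfl⟩ := isOpen_induced_iff.mp hS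
  obtain ⟨I, u, hu, hsub⟩ := isOpen_pi_iff.mp hO _ hx
  refine ⟨I, fun y hy => ?_⟩
  apply hsub
  refine Set.mem_pi.mpr fun t htI => ?_
  show Λ.charOf y.carrier t ∈ u t
  have heqc : Λ.charOf y.carrier t = Λ.charOf x.carrier t := by
    by_cases h : t ∈ x.carrier
    · have h2 : t ∈ y.carrier := (hy t htI).mpr h
      simp [charOf, h, h2]
    · have h2 : t ∉ y.carrier := fun hc => h ((hy t htI).mp hc)
      simp [charOf, h, h2]
  rw [heqc]
  exact (hu t htI).2

end AuxTop

end LblSp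

/-! ### The key point-neighborhood lemma for the reverse direction -/

namespace LblSp

section AuxPoint

variable {V : Type u} {Ed : Type v} {A : Type w} {Λ : LblSp V Ed A}

theorem aux_point (hN : Λ.IsNormal) {Xs Ys : Set (Set (Tr V A))} {m n : ℕ}
    (hXs : ∀ ζ ∈ Xs, Λ.IsTightFilter ζ ∧ ∃ α : Word A, Λ.HasWord ζ α ∧ (m : ℕ∞) ≤ wlength α)
    (hYs : ∀ ζ ∈ Ys, Λ.IsTightFilter ζ ∧ ∃ α : Word A, Λ.HasWord ζ α ∧ (n : ℕ∞) ≤ wlength α)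
    (hXo : IsOpen {ζ : Λ.TightT | ζ.carrier ∈ Xs})
    (hYo : IsOpen {ζ : Λ.TightT | ζ.carrier ∈ Ys})
    {p : Λ.GammaT} (hp : Λ.rawOf p ∈ Λ.VrdRaw Xs Ys m n) :
    ∃ Z ∈ Λ.ZBasisT, p ∈ Z ∧ Z ⊆ {q : Λ.GammaT | Λ.rawOf q ∈ Λ.VrdRaw Xs Ys m n} := by
  classical
  have hLS := hN.toIsWLR.toIsLS
  simp only [VrdRaw, rawOf, Set.mem_setOf_eq] at hp
  obtain ⟨hIn, hmid, hη, hξ, hσ⟩ := hp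
  have hFη : Λ.IsFilterES p.fst.carrier := p.fst.tight.1
  have hFξ : Λ.IsFilterES p.lst.carrier := p.lst.tight.1
  obtain ⟨-, αη, hwαη, hmle⟩ := hXs _ hη
  obtain ⟨-, αξ, hwαξ, hnle⟩ := hYs _ hξ
  set μ := wprefix αη m with hμdef
  set ν := wprefix αξ n with hνdef
  have hμlen : μ.length = m := aux_wprefix_length hmle
  have hνlen : ν.length = n := aux_wprefix_length hnle
  obtain ⟨γη, hγη⟩ := aux_wprefix_split hmle
  obtain ⟨γξ, hγξ⟩ := aux_wprefix_split hnle
  have hwη : Λ.HasWord p.fst.carrier (wappend μ γη) := by rw [← hγη]; exact hwαη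
  have hwξ0 : Λ.HasWord p.lst.carrier (wappend ν γξ) := by rw [← hγξ]; exact hwαξ
  have h1 : (Λ.sigmaMap)^[m] p.fst.carrier = Λ.Hcut μ p.fst.carrier := by
    rw [← hμlen]; exact aux_sigma_iterate hFη.2.1 hwη
  have h2 : (Λ.sigmaMap)^[n] p.lst.carrier = Λ.Hcut ν p.lst.carrier := by
    rw [← hνlen]; exact aux_sigma_iterate hFξ.2.1 hwξ0
  have hHeq : Λ.Hcut μ p.fst.carrier = Λ.Hcut ν p.lst.carrier := by
    rw [← h1, ← h2]; exact hσ
  have hγe : γη = γξ := by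
    have hh1 := aux_Hcut_hasWord hFη.2.1 hwη
    have hh2 := aux_Hcut_hasWord hFξ.2.1 hwξ0
    rw [← hHeq] at hh2
    exact aux_hasWord_unique hh1 hh2
  have hwξ : Λ.HasWord p.lst.carrier (wappend ν γη) := by rw [hγe]; exact hwξ0
  obtain ⟨Iη, hIη⟩ := aux_nbhd_coords hXo (show p.fst ∈ _ from hη)
  obtain ⟨Iξ, hIξ⟩ := aux_nbhd_coords hYo (show p.lst ∈ _ from hξ)
  set posL : List (Tr V A) :=
    (Iη.toList.filterMap fun t =>
      if t ∈ p.fst.carrier then some (auxTr Λ μ ν t) else none)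
    ++ (Iξ.toList.filterMap fun t => if t ∈ p.lst.carrier then some t else none) with hposL
  set negL : List (Tr V A) :=
    (Iη.toList.filterMap fun t =>
      if auxGood Λ μ t ∧ t ∉ p.fst.carrier ∧ auxTr Λ μ ν t ∈ Λ.ESet
      then some (auxTr Λ μ ν t) else none)
    ++ (Iξ.toList.filterMap fun t =>
      if t ∈ Λ.ESet ∧ t ∉ p.lst.carrier then some t else none) with hnegL
  have hpos : ∀ s ∈ posL, s ∈ p.lst.carrier := by
    intro s hs
    rcases List.mem_append.mp hs with hs | hs <;>
      obtain ⟨t, htI, hsome⟩ := List.mem_filterMap.mp hs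
    · by_cases h : t ∈ p.fst.carrier
      · rw [if_pos h] at hsome
        obtain rfl := Option.some.inj hsome
        exact (aux_transl_iff hN hFη hFξ hwη hwξ hHeq (aux_mem_good hFη hwη h)).mp h
      · rw [if_neg h] at hsome
        exact absurd hsome (by simp)
    · by_cases h : t ∈ p.lst.carrier
      · rw [if_pos h] at hsome
        obtain rfl := Option.some.inj hsome
        exact h
      · rw [if_neg h] at hsome
        exact absurd hsome (by simp)
  obtain ⟨e, heξ, hrec⟩ := aux_merge_list hFξ hLS posL hpos
  have hnegE : ∀ f ∈ negL, f ∈ Λ.ESet := by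
    intro f hf
    rcases List.mem_append.mp hf with hf | hf <;>
      obtain ⟨t, htI, hsome⟩ := List.mem_filterMap.mp hf
    · by_cases h : auxGood Λ μ t ∧ t ∉ p.fst.carrier ∧ auxTr Λ μ ν t ∈ Λ.ESet
      · rw [if_pos h] at hsome
        obtain rfl := Option.some.inj hsome
        exact h.2.2
      · rw [if_neg h] at hsome
        exact absurd hsome (by simp)
    · by_cases h : t ∈ Λ.ESet ∧ t ∉ p.lst.carrier
      · rw [if_pos h] at hsome
        obtain rfl := Option.some.inj hsome
        exact h.1
      · rw [if_neg h] at hsome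
        exact absurd hsome (by simp)
  have hnegξ : ∀ f ∈ negL, f ∉ p.lst.carrier := by
    intro f hf
    rcases List.mem_append.mp hf with hf | hf <;>
      obtain ⟨t, htI, hsome⟩ := List.mem_filterMap.mp hf
    · by_cases h : auxGood Λ μ t ∧ t ∉ p.fst.carrier ∧ auxTr Λ μ ν t ∈ Λ.ESet
      · rw [if_pos h] at hsome
        obtain rfl := Option.some.inj hsome
        intro hc
        exact h.2.1 ((aux_transl_iff hN hFη hFξ hwη hwξ hHeq h.1).mpr hc)
      · rw [if_neg h] at hsome
        exact absurd hsome (by simp)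
    · by_cases h : t ∈ Λ.ESet ∧ t ∉ p.lst.carrier
      · rw [if_pos h] at hsome
        obtain rfl := Option.some.inj hsome
        exact h.2
      · rw [if_neg h] at hsome
        exact absurd hsome (by simp)
  obtain ⟨X0, hX0⟩ := aux_exists_SSetX hFη hFξ hwη hwξ hHeq
  refine ⟨{q : Λ.GammaT | Λ.rawOf q ∈ Λ.ZrawGen μ ν e negL},
    ⟨μ, X0, ν, e, negL, hX0, (hFξ.2.1 e heξ).1, hnegE, rfl⟩, ?_, ?_⟩
  · show Λ.rawOf p ∈ Λ.ZrawGen μ ν e negL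
    simp only [ZrawGen, rawOf, Set.mem_setOf_eq]
    refine ⟨hIn, ?_, heξ, hnegξ, γη, hwη, hwξ, hHeq⟩
    rw [hmid, hμlen, hνlen]
  · rintro q hq
    simp only [ZrawGen, rawOf, Set.mem_setOf_eq] at hq
    obtain ⟨hIn', hmid', he', hnes', γ', hw1', hw2', heq'⟩ := hq
    have hFq1 : Λ.IsFilterES q.fst.carrier := q.fst.tight.1
    have hFq2 : Λ.IsFilterES q.lst.carrier := q.lst.tight.1
    have hYmem : q.lst.carrier ∈ Ys := by
      refine hIξ q.lst fun t htI => ?_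
      constructor
      · intro htq
        by_contra htn
        by_cases hE : t ∈ Λ.ESet
        · refine hnes' t ?_ htq
          refine List.mem_append_right _
            (List.mem_filterMap.mpr ⟨t, Finset.mem_toList.mpr htI, ?_⟩)
          rw [if_pos ⟨hE, htn⟩]
        · exact hE (hFq2.2.1 _ htq).1
      · intro htξ
        exact hrec _ hFq2 he' t (List.mem_append_right _
          (List.mem_filterMap.mpr ⟨t, Finset.mem_toList.mpr htI, by rw [if_pos htξ]⟩))
    have hXmem : q.fst.carrier ∈ Xs := by
      refine hIη q.fst fun t htI => ?_
      constructor
      · intro htq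
        have hg := aux_mem_good hFq1 hw1' htq
        have ht1 : auxTr Λ μ ν t ∈ q.lst.carrier :=
          (aux_transl_iff hN hFq1 hFq2 hw1' hw2' heq' hg).mp htq
        by_contra htn
        by_cases hE : auxTr Λ μ ν t ∈ Λ.ESet
        · refine hnes' _ ?_ ht1
          refine List.mem_append_left _
            (List.mem_filterMap.mpr ⟨t, Finset.mem_toList.mpr htI, ?_⟩)
          rw [if_pos ⟨hg, htn, hE⟩]
        · exact hE (hFq2.2.1 _ ht1).1
      · intro htη
        have hg := aux_mem_good hFη hwη htη
        have hmempos : auxTr Λ μ ν t ∈ posL :=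
          List.mem_append_left _
            (List.mem_filterMap.mpr ⟨t, Finset.mem_toList.mpr htI, by rw [if_pos htη]⟩)
        have ht2 : auxTr Λ μ ν t ∈ q.lst.carrier := hrec _ hFq2 he' _ hmempos
        exact (aux_transl_iff hN hFq1 hFq2 hw1' hw2' heq' hg).mpr ht2
    show Λ.rawOf q ∈ Λ.VrdRaw Xs Ys m n
    simp only [VrdRaw, rawOf, Set.mem_setOf_eq]
    refine ⟨hIn', ?_, hXmem, hYmem, ?_⟩
    · rw [hmid', hμlen, hνlen]
    · have hq1 : (Λ.sigmaMap)^[m] q.fst.carrier = Λ.Hcut μ q.fst.carrier := by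
        rw [← hμlen]; exact aux_sigma_iterate hFq1.2.1 hw1'
      have hq2 : (Λ.sigmaMap)^[n] q.lst.carrier = Λ.Hcut ν q.lst.carrier := by
        rw [← hνlen]; exact aux_sigma_iterate hFq2.2.1 hw2'
      rw [hq1, hq2]; exact heq'

end AuxPoint

end LblSp

namespace LblSp

variable {V : Type u} {Ed : Type v} {A : Type w} (Λ : LblSp V Ed A)

/-- The topology on `Γ` with basis the sets `Z_{s,e:e₁,…,eₙ}`
coincides with the Renault–Deaconu topology, whose basic open sets are the sets
`𝒱(X, Y, m, n) = {(η, m-n, ξ) ∈ Γ : (η, ξ) ∈ X × Y, σ^m(η) = σ^n(ξ)}` for `X ⊆ dom(σ^m)`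
and `Y ⊆ dom(σ^n)` open with `σ^m|_X`, `σ^n|_Y` injective. -/
theorem statement_6 (hΛ : Λ.IsNormal) :
    TopologicalSpace.generateFrom Λ.ZBasisT =
      TopologicalSpace.generateFrom
        {Z : Set Λ.GammaT | ∃ (Xs Ys : Set (Set (Tr V A))) (m n : ℕ),
          (∀ ξ ∈ Xs, Λ.IsTightFilter ξ ∧
            ∃ α : Word A, Λ.HasWord ξ α ∧ (m : ℕ∞) ≤ wlength α) ∧
          (∀ ξ ∈ Ys, Λ.IsTightFilter ξ ∧
            ∃ α : Word A, Λ.HasWord ξ α ∧ (n : ℕ∞) ≤ wlength α) ∧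
          IsOpen {ξ : Λ.TightT | ξ.carrier ∈ Xs} ∧
          IsOpen {ξ : Λ.TightT | ξ.carrier ∈ Ys} ∧
          Set.InjOn (Λ.sigmaMap)^[m] Xs ∧ Set.InjOn (Λ.sigmaMap)^[n] Ys ∧
          Z = {p : Λ.GammaT | Λ.rawOf p ∈ Λ.VrdRaw Xs Ys m n}} := by
  classical
  apply le_antisymm
  · -- every Renault–Deaconu basic set is open in the `Z`-topology
    apply le_generateFrom
    rintro Z ⟨Xs, Ys, m, n, hXs, hYs, hXo, hYo, -, -, rfl⟩
    have hU : {p : Λ.GammaT | Λ.rawOf p ∈ Λ.VrdRaw Xs Ys m n}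
        = ⋃₀ {Z' | Z' ∈ Λ.ZBasisT ∧
            Z' ⊆ {p : Λ.GammaT | Λ.rawOf p ∈ Λ.VrdRaw Xs Ys m n}} := by
      ext p
      constructor
      · intro hp
        obtain ⟨Z', hZ1, hZ2, hZ3⟩ := aux_point hΛ hXs hYs hXo hYo hp
        exact ⟨Z', ⟨hZ1, hZ3⟩, hZ2⟩
      · rintro ⟨Z', ⟨-, hZW⟩, hp⟩
        exact hZW hp
    rw [hU]
    exact TopologicalSpace.GenerateOpen.sUnion _ fun Z' hZ' =>
      TopologicalSpace.GenerateOpen.basic _ hZ'.1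
  · -- every `Z`-basic set is a Renault–Deaconu basic set
    apply le_generateFrom
    rintro Z ⟨μ, X, ν, e, es, hs, heE, hesE, rfl⟩
    refine TopologicalSpace.GenerateOpen.basic _
      ⟨{ζ | Λ.IsTightFilter ζ ∧ ∃ γ : Word A, Λ.HasWord ζ (wappend μ γ)},
       {ζ | Λ.IsTightFilter ζ ∧ e ∈ ζ ∧ (∀ f ∈ es, f ∉ ζ) ∧
          ∃ γ : Word A, Λ.HasWord ζ (wappend ν γ)},
       μ.length, ν.length, ?_, ?_, ?_, ?_, ?_, ?_, ?_⟩
    · rintro ζ ⟨ht, γ, hw⟩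
      exact ⟨ht, wappend μ γ, hw, aux_length_le_wlength_wappend μ γ⟩
    · rintro ζ ⟨ht, -, -, γ, hw⟩
      exact ⟨ht, wappend ν γ, hw, aux_length_le_wlength_wappend ν γ⟩
    · have hset : {ζ : Λ.TightT | ζ.carrier ∈
          {ζ | Λ.IsTightFilter ζ ∧ ∃ γ : Word A, Λ.HasWord ζ (wappend μ γ)}}
          = {ζ : Λ.TightT | ∃ γ : Word A, Λ.HasWord ζ.carrier (wappend μ γ)} := by
        ext ζ
        simp only [Set.mem_setOf_eq]
        exact ⟨fun h => h.2, fun h => ⟨ζ.tight, h⟩⟩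
      rw [hset]
      exact aux_isOpen_prefix_slice hΛ μ
    · have hset : {ζ : Λ.TightT | ζ.carrier ∈
          {ζ | Λ.IsTightFilter ζ ∧ e ∈ ζ ∧ (∀ f ∈ es, f ∉ ζ) ∧
            ∃ γ : Word A, Λ.HasWord ζ (wappend ν γ)}}
          = {ζ : Λ.TightT | e ∈ ζ.carrier} ∩ ({ζ : Λ.TightT | ∀ f ∈ es, f ∉ ζ.carrier}
              ∩ {ζ : Λ.TightT | ∃ γ : Word A, Λ.HasWord ζ.carrier (wappend ν γ)}) := by
        ext ζ
        simp only [Set.mem_setOf_eq, Set.mem_inter_iff]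
        exact ⟨fun h => ⟨h.2.1, h.2.2.1, h.2.2.2⟩, fun h => ⟨ζ.tight, h.1, h.2.1, h.2.2⟩⟩
      rw [hset]
      exact (aux_isOpen_coord_true e).inter
        ((aux_isOpen_notmem_list es).inter (aux_isOpen_prefix_slice hΛ ν))
    · rintro a ⟨hta, γa, hwa⟩ b ⟨htb, γb, hwb⟩ hEq
      rw [aux_sigma_iterate hta.1.2.1 hwa, aux_sigma_iterate htb.1.2.1 hwb] at hEq
      exact aux_hcut_inj hΛ hta.1 htb.1 hwa hwb hEq
    · rintro a ⟨hta, -, -, γa, hwa⟩ b ⟨htb, -, -, γb, hwb⟩ hEq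
      rw [aux_sigma_iterate hta.1.2.1 hwa, aux_sigma_iterate htb.1.2.1 hwb] at hEq
      exact aux_hcut_inj hΛ hta.1 htb.1 hwa hwb hEq
    · ext p
      simp only [ZrawGen, VrdRaw, rawOf, Set.mem_setOf_eq]
      constructor
      · rintro ⟨hIn, hmid, he, hes, γ0, hw1, hw2, hHeq⟩
        refine ⟨hIn, hmid, ⟨p.fst.tight, γ0, hw1⟩, ⟨p.lst.tight, he, hes, γ0, hw2⟩, ?_⟩
        rw [aux_sigma_iterate p.fst.tight.1.2.1 hw1, aux_sigma_iterate p.lst.tight.1.2.1 hw2]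
        exact hHeq
      · rintro ⟨hIn, hmid, ⟨-, γ1, hw1⟩, ⟨-, he, hes, γ2, hw2⟩, hσ⟩
        rw [aux_sigma_iterate p.fst.tight.1.2.1 hw1,
          aux_sigma_iterate p.lst.tight.1.2.1 hw2] at hσ
        have hγ : γ1 = γ2 := by
          have hh1 := aux_Hcut_hasWord p.fst.tight.1.2.1 hw1
          have hh2 := aux_Hcut_hasWord p.lst.tight.1.2.1 hw2
          rw [← hσ] at hh2
          exact aux_hasWord_unique hh1 hh2
        exact ⟨hIn, hmid, he, hes, γ1, hw1, by rw [hγ]; exact hw2, hσ⟩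

end LblSp
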